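/- arXiv:1910.09389 — 10 statements merged into one kernel-verified Lean document; each statement's English description precedes it below -/
import Mathlib

section
/- For functions $w_1, w_2 \in BS^p(\mathbb{R},X)$, for all $p_0 \in \mathbb{Z}$, $s \in \mathbb{R}$ and $\tau \in \mathbb{R}$ with $|\tau| \le 1$, one has $\|w_1^b(s+p_0+\tau) - w_2^b(s+\tau)\|_{L^p(0,1;X)}^p \le \sum_{j=\lfloor s\rfloor -1}^{\lfloor s\rfloor +2} \|w_1^b(j+p_0) - w_2^b(j)\|_{L^p(0,1;X)}^p$. -/
open MeasureTheory Set Filter Topology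
open scoped ENNReal

variable {X : Type*} [NormedAddCommGroup X]

/-- The `L^p(0,1;X)`-norm of the Bochner transform `u^b(t)`, raised to the power `p`:
`‖u^b(t)‖_{L^p}^p = ∫_0^1 ‖u(t+θ)‖^p dθ`. -/
noncomputable def SIntegral (p : ℝ) (u : ℝ → X) (t : ℝ) : ℝ :=
  ∫ θ in Ioo (0:ℝ) 1, ‖u (t + θ)‖ ^ p

/-- The Stepanov norm `‖u‖_{S^p} = sup_t ‖u^b(t)‖_{L^p}`. -/
noncomputable def SNorm (p : ℝ) (u : ℝ → X) : ℝ :=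
  ⨆ t : ℝ, (SIntegral p u t) ^ (1 / p)

/-- `u ∈ L^p_loc(ℝ,X)`. -/
def MemLploc (p : ℝ) (u : ℝ → X) : Prop :=
  AEStronglyMeasurable u volume ∧ LocallyIntegrable (fun t => ‖u t‖ ^ p) volume

/-- `u ∈ BS^p(ℝ,X)`: Stepanov bounded functions. -/
def MemBSp (p : ℝ) (u : ℝ → X) : Prop :=
  MemLploc p u ∧ BddAbove (Set.range (SIntegral p u))

/-- `u ∈ S^p_{aa}(ℝ,X)`: the Bochner transform `u^b` is almost automorphic with values in
`L^p(0,1;X)`; convergence in `L^p(0,1;X)` is expressed via the integrals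
`∫_0^1 ‖u(t+s_k+θ) - v(t)(θ)‖^p dθ → 0`. -/
def StepanovAA (p : ℝ) (u : ℝ → X) : Prop :=
  MemLploc p u ∧
  ∀ s : ℕ → ℝ, ∃ φ : ℕ → ℕ, StrictMono φ ∧ ∃ v : ℝ → ℝ → X,
    (∀ t : ℝ, Tendsto (fun k => ∫ θ in Ioo (0:ℝ) 1, ‖u (t + s (φ k) + θ) - v t θ‖ ^ p)
      atTop (𝓝 0)) ∧
    (∀ t : ℝ, Tendsto (fun k => ∫ θ in Ioo (0:ℝ) 1, ‖v (t - s (φ k)) θ - u (t + θ)‖ ^ p)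
      atTop (𝓝 0))

/-- `u ∈ S^p_{ap}(ℝ,X)`: the Bochner transform `u^b` is Bohr almost periodic with values in
`L^p(0,1;X)`. -/
def StepanovAP (p : ℝ) (u : ℝ → X) : Prop :=
  MemLploc p u ∧
  ∀ ε > (0:ℝ), ∃ ℓ > (0:ℝ), ∀ α : ℝ, ∃ τ ∈ Icc α (α + ℓ),
    ∀ t : ℝ, (∫ θ in Ioo (0:ℝ) 1, ‖u (t + τ + θ) - u (t + θ)‖ ^ p) ≤ ε ^ p

/-- A family `H ⊂ L^p_loc(ℝ,X)` is Stepanov tight. -/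
def StepanovTight (H : Set (ℝ → X)) : Prop :=
  ∀ ε > (0:ℝ), ∃ K : Set X, IsCompact K ∧ ∀ u ∈ H, ∀ t : ℝ,
    volume {s ∈ Ioo t (t + 1) | u s ∉ K} < ENNReal.ofReal ε

/-- A family `H ⊂ L^p_loc(ℝ,X)` is Stepanov `p`-uniformly integrable. -/
def StepanovUI (p : ℝ) (H : Set (ℝ → X)) : Prop :=
  ∀ ε > (0:ℝ), ∃ δ > (0:ℝ), ∀ u ∈ H, ∀ t : ℝ, ∀ E : Set ℝ, MeasurableSet E →
    E ⊆ Ioo t (t + 1) → volume E ≤ ENNReal.ofReal δ →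
    (∫ s in E, ‖u s‖ ^ p) ≤ ε

/-- Bohr almost periodic functions `AP(ℝ,E)`. -/
def IsAlmostPeriodic {E : Type*} [NormedAddCommGroup E] (v : ℝ → E) : Prop :=
  Continuous v ∧ ∀ ε > (0:ℝ), ∃ ℓ > (0:ℝ), ∀ α : ℝ, ∃ τ ∈ Icc α (α + ℓ),
    ∀ t : ℝ, ‖v (t + τ) - v t‖ ≤ ε

/-- Almost automorphic functions `AA(ℝ,E)`. -/
def IsAlmostAutomorphic {E : Type*} [NormedAddCommGroup E] (v : ℝ → E) : Prop :=
  Continuous v ∧ ∀ s : ℕ → ℝ, ∃ φ : ℕ → ℕ, StrictMono φ ∧ ∃ w : ℝ → E,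
    (∀ t : ℝ, Tendsto (fun k => v (t + s (φ k))) atTop (𝓝 (w t))) ∧
    (∀ t : ℝ, Tendsto (fun k => w (t - s (φ k))) atTop (𝓝 (v t)))

/-- Lemma: for `w₁, w₂ ∈ BS^p(ℝ,X)`, all `p₀ ∈ ℤ`, `s, τ ∈ ℝ` with `|τ| ≤ 1`,
`‖w₁^b(s+p₀+τ) - w₂^b(s+τ)‖_{L^p}^p ≤ ∑_{j=⌊s⌋-1}^{⌊s⌋+2} ‖w₁^b(j+p₀) - w₂^b(j)‖_{L^p}^p`. -/
theorem stmt_0 (p : ℝ) (hp : 1 ≤ p) (w₁ w₂ : ℝ → X)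
    (h₁ : MemBSp p w₁) (h₂ : MemBSp p w₂)
    (p₀ : ℤ) (s τ : ℝ) (hτ : |τ| ≤ 1) :
    (∫ θ in Ioo (0:ℝ) 1, ‖w₁ (s + (p₀ : ℝ) + τ + θ) - w₂ (s + τ + θ)‖ ^ p) ≤
      ∑ j ∈ Finset.Icc (⌊s⌋ - 1) (⌊s⌋ + 2),
        ∫ θ in Ioo (0:ℝ) 1, ‖w₁ ((j : ℝ) + (p₀ : ℝ) + θ) - w₂ ((j : ℝ) + θ)‖ ^ p := by
  have hp0 : (0:ℝ) ≤ p := le_trans zero_le_one hp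
  set g : ℝ → ℝ := fun x => ‖w₁ (x + (p₀ : ℝ)) - w₂ x‖ ^ p with hg
  set m : ℝ := (⌊s⌋ : ℝ) with hm
  have hgnn : ∀ x, 0 ≤ g x := fun x => Real.rpow_nonneg (norm_nonneg _) p
  -- measurability of g
  have hw₁m : AEStronglyMeasurable (fun x => w₁ (x + (p₀ : ℝ))) volume := by
    exact h₁.1.1.comp_quasiMeasurePreserving
      (measurePreserving_add_right volume (p₀ : ℝ)).quasiMeasurePreserving
  have hgm : AEStronglyMeasurable g volume :=
    (Real.continuous_rpow_const hp0).comp_aestronglyMeasurable (hw₁m.sub h₂.1.1).norm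
  -- integrability of the dominating function on Ioc (m-1) (m+3)
  have hB2 : IntegrableOn (fun x => ‖w₂ x‖ ^ p) (Ioc (m - 1) (m + 3)) volume :=
    (h₂.1.2.integrableOn_isCompact isCompact_Icc).mono_set Ioc_subset_Icc_self
  have hB1 : IntegrableOn (fun x => ‖w₁ (x + (p₀ : ℝ))‖ ^ p) (Ioc (m - 1) (m + 3)) volume := by
    have h0 : IntegrableOn (fun x => ‖w₁ x‖ ^ p)
        (Icc (m - 1 + (p₀ : ℝ)) (m + 3 + (p₀ : ℝ))) volume :=
      h₁.1.2.integrableOn_isCompact isCompact_Icc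
    have h1 : IntervalIntegrable (fun x => ‖w₁ x‖ ^ p) volume
        (m - 1 + (p₀ : ℝ)) (m + 3 + (p₀ : ℝ)) := by
      apply MeasureTheory.IntegrableOn.intervalIntegrable
      rwa [uIcc_of_le (by linarith)]
    have h2 := h1.comp_add_right (p₀ : ℝ)
    simp only [add_sub_cancel_right] at h2
    exact ((intervalIntegrable_iff_integrableOn_Ioc_of_le (by linarith)).mp h2)
  -- pointwise bound
  have hbound : ∀ x, g x ≤ (2:ℝ) ^ p * (‖w₁ (x + (p₀ : ℝ))‖ ^ p + ‖w₂ x‖ ^ p) := by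
    intro x
    set a := ‖w₁ (x + (p₀ : ℝ))‖
    set b := ‖w₂ x‖
    have ha : 0 ≤ a := norm_nonneg _
    have hb : 0 ≤ b := norm_nonneg _
    have h1 : ‖w₁ (x + (p₀ : ℝ)) - w₂ x‖ ≤ 2 * max a b := by
      calc ‖w₁ (x + (p₀ : ℝ)) - w₂ x‖ ≤ a + b := norm_sub_le _ _
        _ ≤ 2 * max a b := by
          rcases le_total a b with h | h <;> simp [max_eq_right, max_eq_left, h] <;> linarith
    have h2 : g x ≤ (2 * max a b) ^ p :=
      Real.rpow_le_rpow (norm_nonneg _) h1 hp0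
    have h3 : (2 * max a b) ^ p = (2:ℝ) ^ p * (max a b) ^ p :=
      Real.mul_rpow (by norm_num) (le_max_of_le_left ha)
    have h4 : (max a b) ^ p ≤ a ^ p + b ^ p := by
      rcases le_total a b with h | h
      · rw [max_eq_right h]
        have : (0:ℝ) ≤ a ^ p := Real.rpow_nonneg ha p
        linarith
      · rw [max_eq_left h]
        have : (0:ℝ) ≤ b ^ p := Real.rpow_nonneg hb p
        linarith
    calc g x ≤ (2 * max a b) ^ p := h2
      _ = (2:ℝ) ^ p * (max a b) ^ p := h3
      _ ≤ (2:ℝ) ^ p * (a ^ p + b ^ p) := by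
          apply mul_le_mul_of_nonneg_left h4 (Real.rpow_nonneg (by norm_num) p)
  -- integrability of g
  have hG : IntegrableOn g (Ioc (m - 1) (m + 3)) volume := by
    apply Integrable.mono' (((hB1.add hB2).const_mul ((2:ℝ) ^ p))) hgm.restrict
    filter_upwards with x
    rw [Real.norm_of_nonneg (hgnn x)]
    exact hbound x
  have hGI : IntervalIntegrable g volume (m - 1) (m + 3) :=
    (intervalIntegrable_iff_integrableOn_Ioc_of_le (by linarith)).mpr hG
  have hGIsub : ∀ a b : ℝ, m - 1 ≤ a → a ≤ b → b ≤ m + 3 → IntervalIntegrable g volume a b := by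
    intro a b h1 h2 h3
    apply hGI.mono_set
    rw [uIcc_of_le h2, uIcc_of_le (by linarith)]
    exact Icc_subset_Icc h1 h3
  -- change of variables
  have key : ∀ t : ℝ, (∫ θ in Ioo (0:ℝ) 1, ‖w₁ (t + (p₀ : ℝ) + θ) - w₂ (t + θ)‖ ^ p)
      = ∫ x in t..(t + 1), g x := by
    intro t
    have e1 : ∀ θ : ℝ, ‖w₁ (t + (p₀ : ℝ) + θ) - w₂ (t + θ)‖ ^ p = g (t + θ) := by
      intro θ; rw [hg]; ring_nf
    simp only [e1]
    rw [← integral_Ioc_eq_integral_Ioo, ← intervalIntegral.integral_of_le zero_le_one,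
      intervalIntegral.integral_comp_add_left g t, add_zero]
  -- bounds for s + τ
  have habs := abs_le.mp hτ
  have hfl1 : m ≤ s := Int.floor_le s
  have hfl2 : s < m + 1 := Int.lt_floor_add_one s
  -- main chain
  have lhs_eq : (∫ θ in Ioo (0:ℝ) 1, ‖w₁ (s + (p₀ : ℝ) + τ + θ) - w₂ (s + τ + θ)‖ ^ p)
      = ∫ x in (s + τ)..(s + τ + 1), g x := by
    have : ∀ θ : ℝ, s + (p₀ : ℝ) + τ + θ = s + τ + (p₀ : ℝ) + θ := fun θ => by ring
    simp only [this]
    exact key (s + τ)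
  rw [lhs_eq]
  have nonneg : 0 ≤ᵐ[volume.restrict (Ioc (m - 1) (m + 3))] g :=
    Filter.Eventually.of_forall hgnn
  have step1 : (∫ x in (s + τ)..(s + τ + 1), g x) ≤ ∫ x in (m - 1)..(m + 3), g x :=
    intervalIntegral.integral_mono_interval (by linarith) (by linarith) (by linarith)
      nonneg hGI
  -- split the big integral into four pieces
  have i1 : IntervalIntegrable g volume (m - 1) m := hGIsub _ _ le_rfl (by linarith) (by linarith)
  have i2 : IntervalIntegrable g volume m (m + 1) :=
    hGIsub _ _ (by linarith) (by linarith) (by linarith)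
  have i3 : IntervalIntegrable g volume (m + 1) (m + 2) :=
    hGIsub _ _ (by linarith) (by linarith) (by linarith)
  have i4 : IntervalIntegrable g volume (m + 2) (m + 3) :=
    hGIsub _ _ (by linarith) (by linarith) le_rfl
  have split : (∫ x in (m - 1)..(m + 3), g x)
      = (∫ x in (m - 1)..m, g x) + (∫ x in m..(m + 1), g x)
        + (∫ x in (m + 1)..(m + 2), g x) + (∫ x in (m + 2)..(m + 3), g x) := by
    rw [intervalIntegral.integral_add_adjacent_intervals i1 i2,
      intervalIntegral.integral_add_adjacent_intervals (i1.trans i2) i3,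
      intervalIntegral.integral_add_adjacent_intervals ((i1.trans i2).trans i3) i4]
  -- rewrite the RHS sum
  have hset : Finset.Icc (⌊s⌋ - 1) (⌊s⌋ + 2)
      = insert (⌊s⌋ - 1) (insert ⌊s⌋ (insert (⌊s⌋ + 1) ({⌊s⌋ + 2} : Finset ℤ))) := by
    ext x
    simp only [Finset.mem_Icc, Finset.mem_insert, Finset.mem_singleton]
    omega
  have rhs_eq : (∑ j ∈ Finset.Icc (⌊s⌋ - 1) (⌊s⌋ + 2),
      ∫ θ in Ioo (0:ℝ) 1, ‖w₁ ((j : ℝ) + (p₀ : ℝ) + θ) - w₂ ((j : ℝ) + θ)‖ ^ p)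
      = (∫ x in (m - 1)..m, g x) + (∫ x in m..(m + 1), g x)
        + (∫ x in (m + 1)..(m + 2), g x) + (∫ x in (m + 2)..(m + 3), g x) := by
    rw [hset]
    rw [Finset.sum_insert
        (by simp only [Finset.mem_insert, Finset.mem_singleton]; omega),
      Finset.sum_insert (by simp only [Finset.mem_insert, Finset.mem_singleton]; omega),
      Finset.sum_insert (by simp only [Finset.mem_singleton]; omega), Finset.sum_singleton]
    push_cast
    rw [key ((⌊s⌋ : ℝ) - 1), key ((⌊s⌋ : ℝ)), key ((⌊s⌋ : ℝ) + 1), key ((⌊s⌋ : ℝ) + 2)]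
    rw [show (⌊s⌋:ℝ) - 1 + 1 = (⌊s⌋:ℝ) by ring, show (⌊s⌋:ℝ) + 1 + 1 = (⌊s⌋:ℝ) + 2 by ring,
      show (⌊s⌋:ℝ) + 2 + 1 = (⌊s⌋:ℝ) + 3 by ring]
    simp only [hm]
    ring
  rw [rhs_eq, ← split]
  exact step1
end

section
/- The discrete Bochner transform $D$ restricts to a homeomorphism of $S^p_{ap}(\mathbb{R},X)$ onto $AP(\mathbb{Z}, L^p(0,1;X))$; in particular, if $u \in BS^p(\mathbb{R},X)$ and the sequence $(u^b(n))_{n\in\mathbb{Z}}$ is almost periodic in $L^p(0,1;X)$, then $u^b$ is Bohr almost periodic from $\mathbb{R}$ to $L^p(0,1;X)$. -/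
open MeasureTheory Set Filter Topology
open scoped ENNReal

variable {X : Type*} [NormedAddCommGroup X]

/-- If `u ∈ BS^p(ℝ,X)` and the sequence `(u^b(n))_{n∈ℤ}` is almost periodic in `L^p(0,1;X)`,
then `u^b` is Bohr almost periodic from `ℝ` into `L^p(0,1;X)`, i.e. `u ∈ S^p_{ap}(ℝ,X)`.
(The `L^p(0,1;X)` distance between `u^b(t₁)` and `u^b(t₂)` is expressed by the integral
`(∫_0^1 ‖u(t₁+θ)-u(t₂+θ)‖^p dθ)^{1/p}`.) -/
theorem stmt_4 (p : ℝ) (hp : 1 ≤ p) (u : ℝ → X) (hu : MemBSp p u)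
    (hAPseq : ∀ ε > (0:ℝ), ∃ N : ℕ, 0 < N ∧ ∀ m : ℤ, ∃ τ : ℤ, m ≤ τ ∧ τ ≤ m + N ∧
      ∀ n : ℤ, (∫ θ in Ioo (0:ℝ) 1, ‖u ((n : ℝ) + (τ : ℝ) + θ) - u ((n : ℝ) + θ)‖ ^ p)
        ≤ ε ^ p) :

    StepanovAP p u := by
  have hp0 : (0:ℝ) ≤ p := le_trans zero_le_one hp
  obtain ⟨⟨hmeas, hloc⟩, _⟩ := hu
  refine ⟨⟨hmeas, hloc⟩, ?_⟩
  intro ε hε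
  -- apply the discrete hypothesis with ε/2
  obtain ⟨N, hN0, hN⟩ := hAPseq (ε/2) (by linarith)
  refine ⟨(N:ℝ) + 1, by positivity, ?_⟩
  intro α
  obtain ⟨τ, hτ1, hτ2, hτ3⟩ := hN ⌈α⌉
  refine ⟨(τ:ℝ), ⟨?_, ?_⟩, ?_⟩
  · exact le_trans (Int.le_ceil α) (by exact_mod_cast hτ1)
  · have h1 : (τ:ℝ) ≤ (⌈α⌉:ℝ) + N := by exact_mod_cast hτ2
    have h2 : (⌈α⌉:ℝ) ≤ α + 1 := le_of_lt (Int.ceil_lt_add_one α)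
    linarith
  intro t
  set f : ℝ → ℝ := fun s => ‖u (s + (τ:ℝ)) - u s‖ ^ p with hf
  have hfnn : ∀ s, 0 ≤ f s := fun s => Real.rpow_nonneg (norm_nonneg _) p
  -- rewrite each Bochner integral as an interval integral of f
  have key : ∀ c : ℝ,
      (∫ θ in Ioo (0:ℝ) 1, ‖u (c + (τ:ℝ) + θ) - u (c + θ)‖ ^ p) = ∫ s in c..(c+1), f s := by
    intro c
    have h1 : (∫ θ in Ioo (0:ℝ) 1, ‖u (c + (τ:ℝ) + θ) - u (c + θ)‖ ^ p)
        = ∫ θ in Ioo (0:ℝ) 1, f (c + θ) := by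
      refine setIntegral_congr_fun measurableSet_Ioo (fun θ _ => ?_)
      simp only [hf]
      ring_nf
    rw [h1, ← integral_Ioc_eq_integral_Ioo,
      ← intervalIntegral.integral_of_le (by norm_num : (0:ℝ) ≤ 1),
      intervalIntegral.integral_comp_add_left f c, add_zero]
  -- integrability of f on any interval
  have hIg : ∀ a b : ℝ, IntervalIntegrable (fun s => ‖u s‖ ^ p) volume a b := by
    intro a b
    rw [intervalIntegrable_iff]
    exact (hloc.integrableOn_isCompact isCompact_uIcc).mono_set uIoc_subset_uIcc
  have hIgτ : ∀ a b : ℝ, IntervalIntegrable (fun s => ‖u (s + (τ:ℝ))‖ ^ p) volume a b := by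
    intro a b
    have h := (hIg (a + (τ:ℝ)) (b + (τ:ℝ))).comp_add_right (τ:ℝ)
    simpa using h
  have hmeasτ : AEStronglyMeasurable (fun s => u (s + (τ:ℝ))) volume :=
    hmeas.comp_quasiMeasurePreserving
      (measurePreserving_add_right volume (τ:ℝ)).quasiMeasurePreserving
  have hfmeas : AEStronglyMeasurable f volume :=
    (Real.continuous_rpow_const hp0).comp_aestronglyMeasurable (hmeasτ.sub hmeas).norm
  have hIf : ∀ a b : ℝ, IntervalIntegrable f volume a b := by
    intro a b
    refine IntervalIntegrable.mono_fun'
      (g := fun s => (2:ℝ) ^ p * (‖u (s + (τ:ℝ))‖ ^ p + ‖u s‖ ^ p))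
      (((hIgτ a b).add (hIg a b)).const_mul _) (hfmeas.restrict) ?_
    refine Eventually.of_forall (fun s => ?_)
    show ‖f s‖ ≤ 2 ^ p * (‖u (s + (τ:ℝ))‖ ^ p + ‖u s‖ ^ p)
    rw [Real.norm_of_nonneg (hfnn s)]
    set x := ‖u (s + (τ:ℝ))‖
    set y := ‖u s‖
    have hx : 0 ≤ x := norm_nonneg _
    have hy : 0 ≤ y := norm_nonneg _
    have h2 : f s ≤ (x + y) ^ p :=
      Real.rpow_le_rpow (norm_nonneg _) (norm_sub_le _ _) hp0
    have h3 : (x + y) ^ p ≤ (2 * max x y) ^ p := by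
      refine Real.rpow_le_rpow (by positivity) ?_ hp0
      rcases le_total x y with h | h
      · rw [max_eq_right h]; linarith
      · rw [max_eq_left h]; linarith
    have h4 : (2 * max x y) ^ p = 2 ^ p * (max x y) ^ p :=
      Real.mul_rpow (by norm_num) (le_max_of_le_left hx)
    have h5 : (max x y) ^ p ≤ x ^ p + y ^ p := by
      rcases le_total x y with h | h
      · rw [max_eq_right h]
        have := Real.rpow_nonneg hx p
        linarith
      · rw [max_eq_left h]
        have := Real.rpow_nonneg hy p
        linarith
    calc f s ≤ (2 * max x y) ^ p := le_trans h2 h3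
      _ = 2 ^ p * (max x y) ^ p := h4
      _ ≤ 2 ^ p * (x ^ p + y ^ p) := by
          have : (0:ℝ) ≤ 2 ^ p := Real.rpow_nonneg (by norm_num) p
          nlinarith
  -- main estimate
  set n : ℤ := ⌊t⌋
  have hn1 : (n:ℝ) ≤ t := Int.floor_le t
  have hn2 : t < (n:ℝ) + 1 := Int.lt_floor_add_one t
  rw [key t]
  have hmono : (∫ s in t..(t+1), f s) ≤ ∫ s in (n:ℝ)..((n:ℝ)+2), f s := by
    refine intervalIntegral.integral_mono_interval hn1 (by linarith) (by linarith)
      (Eventually.of_forall hfnn) (hIf _ _)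
  have hsplit : (∫ s in (n:ℝ)..((n:ℝ)+2), f s)
      = (∫ s in (n:ℝ)..((n:ℝ)+1), f s) + ∫ s in ((n:ℝ)+1)..((n:ℝ)+2), f s :=
    (intervalIntegral.integral_add_adjacent_intervals (hIf _ _) (hIf _ _)).symm
  have hb1 : (∫ s in (n:ℝ)..((n:ℝ)+1), f s) ≤ (ε/2) ^ p := by
    rw [← key (n:ℝ)]; exact hτ3 n
  have hb2 : (∫ s in ((n:ℝ)+1)..((n:ℝ)+2), f s) ≤ (ε/2) ^ p := by
    have e1 : ((n:ℝ)+1) = ((n+1 : ℤ):ℝ) := by push_cast; ring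
    have e2 : ((n:ℝ)+2) = ((n+1 : ℤ):ℝ) + 1 := by push_cast; ring
    rw [e1, e2, ← key ((n+1:ℤ):ℝ)]
    exact hτ3 (n+1)
  have hεp : (ε/2) ^ p + (ε/2) ^ p ≤ ε ^ p := by
    have h1 : (ε/2) ^ p = ε ^ p / 2 ^ p := Real.div_rpow (le_of_lt hε) (by norm_num : (0:ℝ) ≤ 2) p
    have h2 : (2:ℝ) ≤ 2 ^ p := by
      calc (2:ℝ) = 2 ^ (1:ℝ) := (Real.rpow_one 2).symm
        _ ≤ 2 ^ p := Real.rpow_le_rpow_of_exponent_le (by norm_num) hp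
    have h3 : (0:ℝ) < 2 ^ p := Real.rpow_pos_of_pos (by norm_num) p
    have h4 : (0:ℝ) ≤ ε ^ p := Real.rpow_nonneg (le_of_lt hε) p
    rw [h1, ← add_div, div_le_iff₀ h3]
    nlinarith
  linarith
end

section
/- The map $L: BC(\mathbb{R}, L^p(0,1;X)) \to BS^p(\mathbb{R},X)$ defined by $LU(t) = U(\lfloor t\rfloor)(\{t\})$ is a bounded linear left inverse of the Bochner transform $B: BS^p(\mathbb{R},X) \to BC(\mathbb{R},L^p(0,1;X))$, i.e., $L \circ B = \mathrm{Id}$ on $BS^p(\mathbb{R},X)$. -/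
open MeasureTheory Set Filter Topology
open scoped ENNReal

variable {X : Type*} [NormedAddCommGroup X]

section Aux

lemma aux_mp_shift (n : ℝ) :
    MeasurePreserving (fun t : ℝ => t - n) volume volume := by
  simpa [sub_eq_add_neg] using measurePreserving_add_right (volume : Measure ℝ) (-n)

lemma aux_emb_shift (n : ℝ) : MeasurableEmbedding (fun t : ℝ => t - n) :=
  (Homeomorph.subRight n).toMeasurableEquiv.measurableEmbedding

lemma aux_pre_shift (n : ℝ) : (fun t : ℝ => t - n) ⁻¹' (Ioo 0 1) = Ioo n (n + 1) := by
  ext t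
  simp only [mem_preimage, mem_Ioo, sub_pos, sub_lt_iff_lt_add']

lemma aux_mp_shift_restrict (n : ℝ) :
    MeasurePreserving (fun t : ℝ => t - n)
      (volume.restrict (Ioo n (n + 1))) (volume.restrict (Ioo 0 1)) := by
  have := (aux_mp_shift n).restrict_preimage (s := Ioo 0 1) measurableSet_Ioo
  rwa [aux_pre_shift n] at this

lemma aux_shift_integral (h : ℝ → ℝ) (n : ℝ) :
    ∫ t in Ioo n (n + 1), h (t - n) = ∫ θ in Ioo (0:ℝ) 1, h θ := by
  have := (aux_mp_shift n).setIntegral_preimage_emb (aux_emb_shift n) h (Ioo 0 1)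
  rwa [aux_pre_shift n] at this

end Aux

/-- The map `L : BC(ℝ, L^p(0,1;X)) → BS^p(ℝ,X)`, `LU(t) = U(⌊t⌋)({t})`, is a bounded
(linear) left inverse of the Bochner transform `B`. Elements of `BC(ℝ,L^p(0,1;X))` are
represented by functions `U : ℝ → (0,1) → X` which are a.e. strongly measurable in `θ`,
`p`-integrable uniformly in `t`, and continuous in `t` for the `L^p(0,1;X)` distance.
The identity `L ∘ B = Id` holds since `(Bu)(⌊t⌋)({t}) = u(⌊t⌋ + {t}) = u(t)`. -/
theorem stmt_6 (p : ℝ) (hp : 1 ≤ p) :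
    -- L ∘ B = Id on BS^p(ℝ,X)
    (∀ u : ℝ → X, ∀ t : ℝ, (fun θ => u ((⌊t⌋ : ℝ) + θ)) (Int.fract t) = u t) ∧
    -- L is well-defined and bounded: it maps BC(ℝ,L^p(0,1;X)) into BS^p(ℝ,X)
    (∀ U : ℝ → ℝ → X, ∀ C : ℝ,
      (∀ t, AEStronglyMeasurable (U t) (volume.restrict (Ioo (0:ℝ) 1))) →
      (∀ t, IntegrableOn (fun θ => ‖U t θ‖ ^ p) (Ioo (0:ℝ) 1)) →
      (∀ t₀ : ℝ, Tendsto (fun t => ∫ θ in Ioo (0:ℝ) 1, ‖U t θ - U t₀ θ‖ ^ p)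
        (𝓝 t₀) (𝓝 0)) →
      (∀ t, (∫ θ in Ioo (0:ℝ) 1, ‖U t θ‖ ^ p) ≤ C) →
      MemBSp p (fun t => U ⌊t⌋ (Int.fract t)) ∧
        SNorm p (fun t => U ⌊t⌋ (Int.fract t)) ≤
          (2:ℝ) ^ (1 / p) * ⨆ t : ℝ, (∫ θ in Ioo (0:ℝ) 1, ‖U t θ‖ ^ p) ^ (1 / p)) := by
  
  have hp0 : (0:ℝ) < p := lt_of_lt_of_le one_pos hp
  constructor
  · intro u t
    show u (↑⌊t⌋ + Int.fract t) = u t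
    rw [Int.floor_add_fract]
  intro U C hmeas hInt hcont hbound
  clear hcont
  set Lu : ℝ → X := fun t => U ⌊t⌋ (Int.fract t) with hLu
  set g : ℝ → ℝ := fun t => ‖Lu t‖ ^ p with hg
  set I : ℝ → ℝ := fun s => ∫ θ in Ioo (0:ℝ) 1, ‖U s θ‖ ^ p with hI
  have hfloor : ∀ n : ℤ, ∀ t ∈ Ico (n:ℝ) ((n:ℝ) + 1), Lu t = U n (t - n) := by
    intro n t ht
    have h1 : ⌊t⌋ = n := Int.floor_eq_iff.mpr ⟨ht.1, ht.2⟩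
    show U ⌊t⌋ (Int.fract t) = U n (t - n)
    rw [← Int.self_sub_floor, h1]
  -- a.e. strong measurability on each Ico
  have hAESMn : ∀ n : ℤ, AEStronglyMeasurable Lu (volume.restrict (Ico (n:ℝ) ((n:ℝ)+1))) := by
    intro n
    have h1 : AEStronglyMeasurable (fun t : ℝ => U (n:ℝ) (t - (n:ℝ)))
        (volume.restrict (Ioo (n:ℝ) ((n:ℝ)+1))) :=
      (hmeas n).comp_measurePreserving (aux_mp_shift_restrict n)
    rw [Measure.restrict_congr_set Ioo_ae_eq_Ico] at h1
    refine h1.congr ?_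
    filter_upwards [ae_restrict_mem measurableSet_Ico] with t ht
    exact (hfloor n t ht).symm
  have hAESM : AEStronglyMeasurable Lu volume := by
    have huniv : (volume : Measure ℝ) = volume.restrict (⋃ n : ℤ, Ico (n:ℝ) ((n:ℝ)+1)) := by
      rw [iUnion_Ico_intCast, Measure.restrict_univ]
    rw [huniv]
    exact aestronglyMeasurable_iUnion_iff.mpr fun n => hAESMn n
  -- integrability on each Ico
  have hIntn : ∀ n : ℤ, IntegrableOn g (Ico (n:ℝ) ((n:ℝ)+1)) := by
    intro n
    have h1 : IntegrableOn (fun t : ℝ => ‖U (n:ℝ) (t - (n:ℝ))‖ ^ p) (Ioo (n:ℝ) ((n:ℝ)+1)) :=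
      ((aux_mp_shift_restrict (n:ℝ)).integrable_comp (hInt n).aestronglyMeasurable).mpr (hInt n)
    have h2 : IntegrableOn (fun t : ℝ => ‖U (n:ℝ) (t - (n:ℝ))‖ ^ p) (Ico (n:ℝ) ((n:ℝ)+1)) := by
      unfold IntegrableOn
      rwa [← Measure.restrict_congr_set Ioo_ae_eq_Ico]
    refine h2.congr ?_
    filter_upwards [ae_restrict_mem measurableSet_Ico] with t ht
    simp only [hg, hfloor n t ht]
  have hIntIcc : ∀ a b : ℝ, IntegrableOn g (Icc a b) := by
    intro a b
    have hsub : Icc a b ⊆ ⋃ n ∈ Finset.Icc ⌊a⌋ ⌊b⌋, Ico (n:ℝ) ((n:ℝ)+1) := by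
      intro t ht
      refine mem_biUnion ?_ ⟨Int.floor_le t, Int.lt_floor_add_one t⟩
      exact Finset.mem_Icc.mpr ⟨Int.floor_le_floor ht.1, Int.floor_le_floor ht.2⟩
    exact (integrableOn_finset_iUnion.mpr fun n _ => hIntn n).mono_set hsub
  have hLocInt : LocallyIntegrable g volume := by
    rw [locallyIntegrable_iff]
    intro K hK
    obtain ⟨r, hr⟩ := hK.isBounded.subset_closedBall 0
    rw [Real.closedBall_eq_Icc, zero_sub, zero_add] at hr
    exact (hIntIcc (-r) r).mono_set hr
  have hI0 : ∀ s : ℝ, 0 ≤ I s :=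
    fun s => integral_nonneg fun θ => Real.rpow_nonneg (norm_nonneg _) p
  have hC0 : (0:ℝ) ≤ C := le_trans (hI0 0) (hbound 0)
  have hIcoInt : ∀ n : ℤ, ∫ t in Ico (n:ℝ) ((n:ℝ)+1), g t = I n := by
    intro n
    rw [← Measure.restrict_congr_set Ioo_ae_eq_Ico]
    have e2 : ∫ t in Ioo (n:ℝ) ((n:ℝ)+1), g t
        = ∫ t in Ioo (n:ℝ) ((n:ℝ)+1), ‖U (n:ℝ) (t - (n:ℝ))‖ ^ p := by
      refine integral_congr_ae ?_
      filter_upwards [ae_restrict_mem measurableSet_Ioo] with t ht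
      simp only [hg, hfloor n t (Ioo_subset_Ico_self ht)]
    rw [e2, aux_shift_integral (fun θ => ‖U (n:ℝ) θ‖ ^ p) (n:ℝ)]
  have hg0 : ∀ s : ℝ, 0 ≤ g s := fun s => Real.rpow_nonneg (norm_nonneg _) p
  -- key bound on the Stepanov integral
  have hSI : ∀ t : ℝ, SIntegral p Lu t ≤ I ⌊t⌋ + I ((⌊t⌋:ℝ) + 1) := by
    intro t
    set n : ℤ := ⌊t⌋ with hn
    have h1 : SIntegral p Lu t = ∫ s in Ioo t (t+1), g s := by
      have h := aux_shift_integral (fun θ => ‖Lu (t + θ)‖ ^ p) t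
      have heq : ∀ s : ℝ, t + (s - t) = s := fun s => by ring
      simp only [heq] at h
      exact h.symm
    have hIntn' : IntegrableOn g (Ico ((n:ℝ)+1) ((n:ℝ)+2)) := by
      have h := hIntn (n+1)
      simp only [Int.cast_add, Int.cast_one] at h
      rwa [show ((n:ℝ)+1+1) = (n:ℝ)+2 from by ring] at h
    have hu : IntegrableOn g (Ico (n:ℝ) ((n:ℝ)+1) ∪ Ico ((n:ℝ)+1) ((n:ℝ)+2)) :=
      (hIntn n).union hIntn'
    have hsub : Ioo t (t+1) ⊆ Ico (n:ℝ) ((n:ℝ)+1) ∪ Ico ((n:ℝ)+1) ((n:ℝ)+2) := by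
      intro s hs
      rcases lt_or_ge s ((n:ℝ)+1) with h | h
      · exact Or.inl ⟨le_trans (Int.floor_le t) hs.1.le, h⟩
      · refine Or.inr ⟨h, ?_⟩
        have : t < (n:ℝ) + 1 := Int.lt_floor_add_one t
        linarith [hs.2]
    have h2 : ∫ s in Ioo t (t+1), g s
        ≤ ∫ s in Ico (n:ℝ) ((n:ℝ)+1) ∪ Ico ((n:ℝ)+1) ((n:ℝ)+2), g s := by
      refine setIntegral_mono_set hu (Eventually.of_forall hg0) hsub.eventuallyLE
    have h3 : ∫ s in Ico (n:ℝ) ((n:ℝ)+1) ∪ Ico ((n:ℝ)+1) ((n:ℝ)+2), g s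
        = (∫ s in Ico (n:ℝ) ((n:ℝ)+1), g s) + ∫ s in Ico ((n:ℝ)+1) ((n:ℝ)+2), g s :=
      setIntegral_union (Ico_disjoint_Ico_same) measurableSet_Ico (hIntn n) hIntn'
    have h4 : ∫ s in Ico ((n:ℝ)+1) ((n:ℝ)+2), g s = I ((n:ℝ)+1) := by
      have h := hIcoInt (n+1)
      simp only [Int.cast_add, Int.cast_one] at h
      rwa [show ((n:ℝ)+1+1) = (n:ℝ)+2 from by ring] at h
    rw [h1]
    calc ∫ s in Ioo t (t+1), g s
        ≤ (∫ s in Ico (n:ℝ) ((n:ℝ)+1), g s) + ∫ s in Ico ((n:ℝ)+1) ((n:ℝ)+2), g s :=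
          h2.trans_eq h3
      _ = I (n:ℝ) + I ((n:ℝ)+1) := by rw [hIcoInt n, h4]
  have hBdd : BddAbove (Set.range (SIntegral p Lu)) := by
    refine ⟨2 * C, ?_⟩
    rintro _ ⟨t, rfl⟩
    calc SIntegral p Lu t ≤ I ⌊t⌋ + I ((⌊t⌋:ℝ)+1) := hSI t
      _ ≤ C + C := add_le_add (hbound _) (hbound _)
      _ = 2 * C := by ring
  refine ⟨⟨⟨hAESM, hLocInt⟩, hBdd⟩, ?_⟩
  -- norm bound
  set S : ℝ := ⨆ s : ℝ, (I s) ^ (1/p) with hS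
  have hBddS : BddAbove (Set.range fun s : ℝ => (I s) ^ (1/p)) := by
    refine ⟨C ^ (1/p), ?_⟩
    rintro _ ⟨s, rfl⟩
    exact Real.rpow_le_rpow (hI0 s) (hbound s) (by positivity)
  have hS0 : 0 ≤ S :=
    le_trans (Real.rpow_nonneg (hI0 0) _) (le_ciSup hBddS 0)
  have hISp : ∀ s : ℝ, I s ≤ S ^ p := by
    intro s
    have h1 : (I s) ^ (1/p) ≤ S := le_ciSup hBddS s
    calc I s = ((I s) ^ (1/p)) ^ p := by
          rw [← Real.rpow_mul (hI0 s), one_div_mul_cancel hp0.ne', Real.rpow_one]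
      _ ≤ S ^ p := Real.rpow_le_rpow (Real.rpow_nonneg (hI0 s) _) h1 hp0.le
  have hSInonneg : ∀ t : ℝ, 0 ≤ SIntegral p Lu t :=
    fun t => integral_nonneg fun θ => Real.rpow_nonneg (norm_nonneg _) p
  rw [SNorm]
  refine ciSup_le fun t => ?_
  have h2 : SIntegral p Lu t ≤ 2 * S ^ p :=
    le_trans (hSI t) (by linarith [hISp (⌊t⌋:ℝ), hISp ((⌊t⌋:ℝ)+1)])
  calc (SIntegral p Lu t) ^ (1/p) ≤ (2 * S ^ p) ^ (1/p) :=
        Real.rpow_le_rpow (hSInonneg t) h2 (by positivity)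
    _ = (2:ℝ) ^ (1/p) * (S ^ p) ^ (1/p) :=
        Real.mul_rpow (by norm_num) (Real.rpow_nonneg hS0 _)
    _ = (2:ℝ) ^ (1/p) * S := by
        rw [← Real.rpow_mul hS0, mul_one_div_cancel hp0.ne', Real.rpow_one]
end

section
/- The range $\mathrm{Im}(B)$ of the Bochner transform $B: BS^p(\mathbb{R},X) \to BC(\mathbb{R},L^p(0,1;X))$ is a closed subspace which admits the topological complement $M = \{V \in BC(\mathbb{R},L^p(0,1;X)) : V(n)=0 \text{ for all } n\in\mathbb{Z}\}$, i.e., $BC(\mathbb{R},L^p(0,1;X)) = \mathrm{Im}(B) \oplus M$. -/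
open MeasureTheory Set Filter Topology
open scoped ENNReal

variable {X : Type*} [NormedAddCommGroup X]

section BochnerAux

open MeasureTheory Set Filter Topology
open scoped ENNReal

namespace BochnerAux


variable {X : Type*} [NormedAddCommGroup X] {q : ℝ≥0∞}

/-- Canonical reconstruction of a function `ℝ → X` from a family of `L^p(0,1;X)` elements. -/
noncomputable def recon (V : ℝ → Lp X q (volume.restrict (Ioo (0:ℝ) 1))) : ℝ → X :=
  fun s => (V ((⌊s⌋ : ℤ) : ℝ) : ℝ → X) (Int.fract s)

lemma measurePreserving_shift (t a b : ℝ) :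
    MeasurePreserving (fun θ : ℝ => t + θ) ((volume : Measure ℝ).restrict (Ioo a b))
      ((volume : Measure ℝ).restrict (Ioo (t + a) (t + b))) := by
  have h := (measurePreserving_add_left (volume : Measure ℝ) t).restrict_preimage
    (measurableSet_Ioo (a := t + a) (b := t + b))
  rwa [preimage_const_add_Ioo, add_sub_cancel_left, add_sub_cancel_left] at h

lemma shiftμ (t : ℝ) : MeasurePreserving (fun θ : ℝ => t + θ) (volume.restrict (Ioo (0:ℝ) 1))
    ((volume : Measure ℝ).restrict (Ioo t (t + 1))) := by
  have h := measurePreserving_shift t 0 1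
  simpa using h

lemma recon_eq (V : ℝ → Lp X q (volume.restrict (Ioo (0:ℝ) 1))) {m : ℤ} {s : ℝ} (hs : s ∈ Ioo (m : ℝ) ((m : ℝ) + 1)) :
    recon V s = (V (m : ℝ) : ℝ → X) (s - m) := by
  have hfl : ⌊s⌋ = m := by
    rw [Int.floor_eq_iff]
    exact ⟨hs.1.le, by push_cast; exact hs.2⟩
  simp only [recon, hfl, Int.fract]

lemma int_memℒp (V : ℝ → Lp X q (volume.restrict (Ioo (0:ℝ) 1))) (m : ℤ) :
    MemLp (recon V) q ((volume : Measure ℝ).restrict (Ioo (m : ℝ) ((m : ℝ) + 1))) ∧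
      eLpNorm (recon V) q ((volume : Measure ℝ).restrict (Ioo (m : ℝ) ((m : ℝ) + 1)))
        = eLpNorm (V (m : ℝ) : ℝ → X) q (volume.restrict (Ioo (0:ℝ) 1)) := by
  have hmp : MeasurePreserving (fun s : ℝ => -(m : ℝ) + s)
      ((volume : Measure ℝ).restrict (Ioo (m : ℝ) ((m : ℝ) + 1))) (volume.restrict (Ioo (0:ℝ) 1)) := by
    have h := measurePreserving_shift (-(m : ℝ)) (m : ℝ) ((m : ℝ) + 1)
    have h1 : -(m : ℝ) + (m : ℝ) = 0 := by ring
    have h2 : -(m : ℝ) + ((m : ℝ) + 1) = 1 := by ring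
    rwa [h1, h2] at h
  have hae : recon V =ᵐ[(volume : Measure ℝ).restrict (Ioo (m : ℝ) ((m : ℝ) + 1))]
      ((V (m : ℝ) : ℝ → X) ∘ fun s => -(m : ℝ) + s) := by
    refine (ae_restrict_iff' measurableSet_Ioo).2 (Eventually.of_forall fun s hs => ?_)
    rw [recon_eq V hs]
    simp only [Function.comp]
    congr 1
    ring
  constructor
  · exact ((Lp.memLp (V (m : ℝ))).comp_measurePreserving hmp).ae_eq hae.symm
  · rw [eLpNorm_congr_ae hae]
    exact eLpNorm_comp_measurePreserving (Lp.aestronglyMeasurable _) hmp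

lemma chunk (V : ℝ → Lp X q (volume.restrict (Ioo (0:ℝ) 1))) (m : ℤ) {S : Set ℝ} (hS : MeasurableSet S)
    (hsub : S ⊆ Icc (m : ℝ) ((m : ℝ) + 1)) :
    MemLp (S.indicator (recon V)) q (volume : Measure ℝ) ∧
      eLpNorm (S.indicator (recon V)) q (volume : Measure ℝ)
        ≤ eLpNorm (V (m : ℝ) : ℝ → X) q (volume.restrict (Ioo (0:ℝ) 1)) := by
  have hle : (volume : Measure ℝ).restrict S
      ≤ (volume : Measure ℝ).restrict (Ioo (m : ℝ) ((m : ℝ) + 1)) := by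
    rw [Measure.restrict_congr_set Ioo_ae_eq_Icc]
    exact Measure.restrict_mono hsub le_rfl
  have hmem := (int_memℒp V m).1
  refine ⟨⟨(aestronglyMeasurable_indicator_iff hS).2
    (hmem.aestronglyMeasurable.mono_measure hle), ?_⟩, ?_⟩
  · rw [eLpNorm_indicator_eq_eLpNorm_restrict hS]
    exact (eLpNorm_mono_measure _ hle).trans_lt hmem.2
  · rw [eLpNorm_indicator_eq_eLpNorm_restrict hS, ← (int_memℒp V m).2]
    exact eLpNorm_mono_measure _ hle

variable [Fact (1 ≤ q)]

lemma windowF (V : ℝ → Lp X q (volume.restrict (Ioo (0:ℝ) 1))) (t : ℝ) :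
    MemLp ((Ioo t (t + 1)).indicator (recon V)) q (volume : Measure ℝ) ∧
      eLpNorm ((Ioo t (t + 1)).indicator (recon V)) q (volume : Measure ℝ)
        ≤ eLpNorm (V ((⌊t⌋ : ℤ) : ℝ) : ℝ → X) q (volume.restrict (Ioo (0:ℝ) 1))
          + eLpNorm (V (((⌊t⌋ : ℤ) : ℝ) + 1) : ℝ → X) q (volume.restrict (Ioo (0:ℝ) 1)) := by
  set n : ℤ := ⌊t⌋ with hn
  have h1 : (n : ℝ) ≤ t := Int.floor_le t
  have h2 : t < (n : ℝ) + 1 := Int.lt_floor_add_one t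
  have hU : Ioo t (t + 1) = Ioo t ((n : ℝ) + 1) ∪ Ico ((n : ℝ) + 1) (t + 1) := by
    ext x
    simp only [mem_Ioo, mem_Ico, mem_union]
    constructor
    · rintro ⟨hx1, hx2⟩
      rcases lt_or_ge x ((n : ℝ) + 1) with h | h
      · exact Or.inl ⟨hx1, h⟩
      · exact Or.inr ⟨h, hx2⟩
    · rintro (⟨hx1, hx2⟩ | ⟨hx1, hx2⟩)
      · exact ⟨hx1, by linarith⟩
      · exact ⟨by linarith, hx2⟩
  have hdisj : Disjoint (Ioo t ((n : ℝ) + 1)) (Ico ((n : ℝ) + 1) (t + 1)) := by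
    rw [Set.disjoint_left]
    rintro x ⟨_, hx2⟩ ⟨hx3, _⟩
    exact absurd hx3 (not_le.2 hx2)
  have hsub1 : Ioo t ((n : ℝ) + 1) ⊆ Icc (n : ℝ) ((n : ℝ) + 1) :=
    fun x hx => ⟨by linarith [hx.1], hx.2.le⟩
  have hcast : ((n + 1 : ℤ) : ℝ) = (n : ℝ) + 1 := by push_cast; ring
  have hsub2 : Ico ((n : ℝ) + 1) (t + 1) ⊆ Icc ((n + 1 : ℤ) : ℝ) (((n + 1 : ℤ) : ℝ) + 1) := by
    rw [hcast]
    rintro x ⟨hx1, hx2⟩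
    exact ⟨hx1, by linarith⟩
  have c1 := chunk V n measurableSet_Ioo hsub1
  have c2 := chunk V (n + 1) measurableSet_Ico hsub2
  rw [hcast] at c2
  rw [hU, Set.indicator_union_of_disjoint hdisj]
  refine ⟨c1.1.add c2.1, ?_⟩
  calc eLpNorm (_ + _) q (volume : Measure ℝ)
      ≤ eLpNorm ((Ioo t ((n : ℝ) + 1)).indicator (recon V)) q (volume : Measure ℝ)
        + eLpNorm ((Ico ((n : ℝ) + 1) (t + 1)).indicator (recon V)) q (volume : Measure ℝ) :=
        eLpNorm_add_le c1.1.aestronglyMeasurable c2.1.aestronglyMeasurable Fact.out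
    _ ≤ _ := add_le_add c1.2 c2.2

lemma recon_shift_ae (V : ℝ → Lp X q (volume.restrict (Ioo (0:ℝ) 1))) (t : ℝ) :
    (fun θ : ℝ => recon V (t + θ)) =ᵐ[(volume.restrict (Ioo (0:ℝ) 1))]
      (((Ioo t (t + 1)).indicator (recon V)) ∘ fun θ => t + θ) := by
  refine (ae_restrict_iff' measurableSet_Ioo).2 (Eventually.of_forall fun θ hθ => ?_)
  have hmem : t + θ ∈ Ioo t (t + 1) := ⟨by linarith [hθ.1], by linarith [hθ.2]⟩
  simp [Function.comp, Set.indicator_of_mem hmem]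

lemma recon_shift_memℒp (V : ℝ → Lp X q (volume.restrict (Ioo (0:ℝ) 1))) (t : ℝ) :
    MemLp (fun θ : ℝ => recon V (t + θ)) q (volume.restrict (Ioo (0:ℝ) 1)) := by
  have h := (windowF V t).1
  exact ((h.mono_measure Measure.restrict_le_self).comp_measurePreserving
    (shiftμ t)).ae_eq (recon_shift_ae V t).symm

lemma recon_shift_eLpNorm (V : ℝ → Lp X q (volume.restrict (Ioo (0:ℝ) 1))) (t : ℝ) :
    eLpNorm (fun θ : ℝ => recon V (t + θ)) q (volume.restrict (Ioo (0:ℝ) 1))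
      ≤ eLpNorm (V ((⌊t⌋ : ℤ) : ℝ) : ℝ → X) q (volume.restrict (Ioo (0:ℝ) 1))
        + eLpNorm (V (((⌊t⌋ : ℤ) : ℝ) + 1) : ℝ → X) q (volume.restrict (Ioo (0:ℝ) 1)) := by
  rw [eLpNorm_congr_ae (recon_shift_ae V t),
    eLpNorm_comp_measurePreserving
      ((windowF V t).1.aestronglyMeasurable.mono_measure Measure.restrict_le_self) (shiftμ t)]
  exact (eLpNorm_mono_measure _ Measure.restrict_le_self).trans (windowF V t).2

/-- The Bochner-transform reconstruction, as an element of `L^p(0,1;X)`. -/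
noncomputable def reconLp (V : ℝ → Lp X q (volume.restrict (Ioo (0:ℝ) 1))) (t : ℝ) : Lp X q (volume.restrict (Ioo (0:ℝ) 1)) :=
  (recon_shift_memℒp V t).toLp _

lemma reconLp_int (V : ℝ → Lp X q (volume.restrict (Ioo (0:ℝ) 1))) (n : ℤ) : reconLp V ((n : ℤ) : ℝ) = V ((n : ℤ) : ℝ) := by
  have hae : (fun θ : ℝ => recon V ((n : ℝ) + θ)) =ᵐ[(volume.restrict (Ioo (0:ℝ) 1))] (V ((n : ℤ) : ℝ) : ℝ → X) := by
    refine (ae_restrict_iff' measurableSet_Ioo).2 (Eventually.of_forall fun θ hθ => ?_)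
    have hmem : (n : ℝ) + θ ∈ Ioo (n : ℝ) ((n : ℝ) + 1) :=
      ⟨by linarith [hθ.1], by linarith [hθ.2]⟩
    show recon V ((n : ℝ) + θ) = _
    rw [recon_eq V hmem]
    congr 1
    ring
  exact (MemLp.toLp_congr _ (Lp.memLp _) hae).trans (Lp.toLp_coeFn _ _)

/-- Master a.e. identification lemma. -/
lemma recon_ae (V : ℝ → Lp X q (volume.restrict (Ioo (0:ℝ) 1))) (u : ℝ → X)
    (h : ∀ n : ℤ, (fun θ : ℝ => u ((n : ℝ) + θ)) =ᵐ[(volume.restrict (Ioo (0:ℝ) 1))] (V ((n : ℤ) : ℝ) : ℝ → X)) :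
    recon V =ᵐ[(volume : Measure ℝ)] u := by
  have hZ : (volume : Measure ℝ) (Set.range ((↑) : ℤ → ℝ)) = 0 :=
    (Set.countable_range _).measure_zero _
  have h1 : ∀ n : ℤ, ∀ᵐ s ∂(volume : Measure ℝ),
      s ∈ Ioo ((n : ℝ)) ((n : ℝ) + 1) → recon V s = u s := by
    intro n
    have h0 : ∀ᵐ θ ∂(volume : Measure ℝ),
        θ ∈ Ioo (0 : ℝ) 1 → u ((n : ℝ) + θ) = (V ((n : ℤ) : ℝ) : ℝ → X) θ :=
      (ae_restrict_iff' measurableSet_Ioo).1 (h n)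
    have hmp := measurePreserving_add_right (volume : Measure ℝ) (-(n : ℝ))
    have h2 := ae_of_ae_map hmp.aemeasurable (by rw [hmp.map_eq]; exact h0)
    filter_upwards [h2] with s hs hmem
    have h3 : s + -(n : ℝ) ∈ Ioo (0 : ℝ) 1 :=
      ⟨by linarith [hmem.1], by linarith [hmem.2]⟩
    have h4 := hs h3
    rw [recon_eq V hmem]
    rw [show s - (n : ℝ) = s + -(n : ℝ) by ring, ← h4]
    congr 1
    ring
  filter_upwards [ae_all_iff.2 h1, compl_mem_ae_iff.2 hZ] with s hs hsni
  have hfl1 : ((⌊s⌋ : ℤ) : ℝ) < s :=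
    lt_of_le_of_ne (Int.floor_le s) fun he => hsni ⟨⌊s⌋, he⟩
  exact hs ⌊s⌋ ⟨hfl1, Int.lt_floor_add_one s⟩

lemma ae_shift {f g : ℝ → X} (h : f =ᵐ[(volume : Measure ℝ)] g) (t : ℝ) :
    (fun θ : ℝ => f (t + θ)) =ᵐ[(volume.restrict (Ioo (0:ℝ) 1))] fun θ : ℝ => g (t + θ) := by
  have h2 : ∀ᵐ s ∂((volume : Measure ℝ).restrict (Ioo t (t + 1))), f s = g s :=
    ae_mono Measure.restrict_le_self h
  have h3 : ∀ᵐ θ ∂((volume : Measure ℝ).restrict (Ioo (0:ℝ) 1)), f (t + θ) = g (t + θ) :=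
    ae_of_ae_map (p := fun s => f s = g s) (shiftμ t).aemeasurable
      (by rw [(shiftμ t).map_eq]; exact h2)
  exact h3

lemma edist_coe_sub (f g : Lp X q (volume.restrict (Ioo (0:ℝ) 1))) : eLpNorm (⇑(f - g)) q (volume.restrict (Ioo (0:ℝ) 1)) = edist f g := by
  rw [Lp.edist_def]
  exact eLpNorm_congr_ae (Lp.coeFn_sub f g)

lemma recon_sub_ae (V V' : ℝ → Lp X q (volume.restrict (Ioo (0:ℝ) 1))) :
    (fun s => recon V s - recon V' s)
      =ᵐ[(volume : Measure ℝ)] recon (fun r => V r - V' r) := by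
  refine (recon_ae (fun r => V r - V' r) (fun s => recon V s - recon V' s) fun n => ?_).symm
  filter_upwards [Lp.coeFn_sub (V ((n : ℤ) : ℝ)) (V' ((n : ℤ) : ℝ)),
    ae_restrict_mem measurableSet_Ioo] with θ hθ1 hθ2
  have hmem : (n : ℝ) + θ ∈ Ioo (n : ℝ) ((n : ℝ) + 1) :=
    ⟨by linarith [hθ2.1], by linarith [hθ2.2]⟩
  have e1 : recon V ((n : ℝ) + θ) = (V ((n : ℤ) : ℝ) : ℝ → X) θ := by
    rw [recon_eq V hmem]; congr 1; ring
  have e2 : recon V' ((n : ℝ) + θ) = (V' ((n : ℤ) : ℝ) : ℝ → X) θ := by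
    rw [recon_eq V' hmem]; congr 1; ring
  rw [e1, e2, hθ1]
  rfl

lemma reconLp_edist (V V' : ℝ → Lp X q (volume.restrict (Ioo (0:ℝ) 1))) (t : ℝ) :
    edist (reconLp V t) (reconLp V' t)
      ≤ edist (V ((⌊t⌋ : ℤ) : ℝ)) (V' ((⌊t⌋ : ℤ) : ℝ))
        + edist (V (((⌊t⌋ : ℤ) : ℝ) + 1)) (V' (((⌊t⌋ : ℤ) : ℝ) + 1)) := by
  rw [reconLp, reconLp, Lp.edist_toLp_toLp]
  have hae : ((fun θ : ℝ => recon V (t + θ)) - fun θ : ℝ => recon V' (t + θ))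
      =ᵐ[(volume.restrict (Ioo (0:ℝ) 1))] fun θ : ℝ => recon (fun r => V r - V' r) (t + θ) := by
    have h := ae_shift (recon_sub_ae V V') t
    refine h.mono fun θ hθ => ?_
    simpa using hθ
  rw [eLpNorm_congr_ae hae]
  refine (recon_shift_eLpNorm (fun r => V r - V' r) t).trans ?_
  rw [edist_coe_sub, edist_coe_sub]

lemma reconLp_norm_le (V : ℝ → Lp X q (volume.restrict (Ioo (0:ℝ) 1))) (t : ℝ) :
    ‖reconLp V t‖ ≤ ‖V ((⌊t⌋ : ℤ) : ℝ)‖ + ‖V (((⌊t⌋ : ℤ) : ℝ) + 1)‖ := by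
  rw [reconLp, Lp.norm_def, Lp.norm_def, Lp.norm_def]
  rw [eLpNorm_congr_ae (MemLp.coeFn_toLp _)]
  have hb := recon_shift_eLpNorm V t
  have hfin : eLpNorm (V ((⌊t⌋ : ℤ) : ℝ) : ℝ → X) q (volume.restrict (Ioo (0:ℝ) 1))
      + eLpNorm (V (((⌊t⌋ : ℤ) : ℝ) + 1) : ℝ → X) q (volume.restrict (Ioo (0:ℝ) 1)) ≠ ∞ :=
    ENNReal.add_ne_top.2 ⟨Lp.eLpNorm_ne_top _, Lp.eLpNorm_ne_top _⟩
  calc (eLpNorm (fun θ : ℝ => recon V (t + θ)) q (volume.restrict (Ioo (0:ℝ) 1))).toReal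
      ≤ (eLpNorm (V ((⌊t⌋ : ℤ) : ℝ) : ℝ → X) q (volume.restrict (Ioo (0:ℝ) 1))
        + eLpNorm (V (((⌊t⌋ : ℤ) : ℝ) + 1) : ℝ → X) q (volume.restrict (Ioo (0:ℝ) 1))).toReal :=
        ENNReal.toReal_mono hfin hb
    _ ≤ _ := by
        rw [ENNReal.toReal_add (Lp.eLpNorm_ne_top _) (Lp.eLpNorm_ne_top _)]

lemma reconLp_continuous (hq : q ≠ ∞) (V : ℝ → Lp X q (volume.restrict (Ioo (0:ℝ) 1))) :
    Continuous fun t => reconLp V t := by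
  rw [continuous_iff_continuousAt]
  intro t₀
  set n : ℤ := ⌊t₀⌋ with hn
  have hn1 : (n : ℝ) ≤ t₀ := Int.floor_le t₀
  have hn2 : t₀ < (n : ℝ) + 1 := Int.lt_floor_add_one t₀
  set s1 : Set ℝ := Ioc ((n : ℝ) - 1) (n : ℝ)
  set s2 : Set ℝ := Ioc (n : ℝ) ((n : ℝ) + 1)
  set s3 : Set ℝ := Ioc ((n : ℝ) + 1) ((n : ℝ) + 2)
  set s4 : Set ℝ := Ioo ((n : ℝ) + 2) ((n : ℝ) + 3)
  set S : Set ℝ := Ioo ((n : ℝ) - 1) ((n : ℝ) + 3) with hS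
  have hSeq : S = ((s1 ∪ s2) ∪ s3) ∪ s4 := by
    ext x
    simp only [hS, s1, s2, s3, s4, mem_Ioo, mem_Ioc, mem_union]
    constructor
    · rintro ⟨ha, hb⟩
      rcases le_or_gt x (n : ℝ) with h | h
      · exact Or.inl (Or.inl (Or.inl ⟨ha, h⟩))
      rcases le_or_gt x ((n : ℝ) + 1) with h' | h'
      · exact Or.inl (Or.inl (Or.inr ⟨h, h'⟩))
      rcases le_or_gt x ((n : ℝ) + 2) with h'' | h''
      · exact Or.inl (Or.inr ⟨h', h''⟩)
      · exact Or.inr ⟨h'', hb⟩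
    · rintro (((⟨a, b⟩ | ⟨a, b⟩) | ⟨a, b⟩) | ⟨a, b⟩) <;> constructor <;> linarith
  have hd12 : Disjoint s1 s2 := by
    rw [Set.disjoint_left]; rintro x ⟨_, h⟩ ⟨h', _⟩; linarith
  have hd123 : Disjoint (s1 ∪ s2) s3 := by
    rw [Set.disjoint_left]; rintro x (⟨_, h⟩ | ⟨_, h⟩) ⟨h', _⟩ <;> linarith
  have hd1234 : Disjoint ((s1 ∪ s2) ∪ s3) s4 := by
    rw [Set.disjoint_left]
    rintro x ((⟨_, h⟩ | ⟨_, h⟩) | ⟨_, h⟩) ⟨h', _⟩ <;> linarith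
  have hc1 := chunk V (n - 1) (measurableSet_Ioc)
    (by rw [show (((n : ℤ) - 1 : ℤ) : ℝ) = (n : ℝ) - 1 by push_cast; ring]
        intro x hx
        exact ⟨hx.1.le, by rw [show (n : ℝ) - 1 + 1 = (n : ℝ) by ring]; exact hx.2⟩ :
      s1 ⊆ Icc (((n : ℤ) - 1 : ℤ) : ℝ) ((((n : ℤ) - 1 : ℤ) : ℝ) + 1))
  have hc2 := chunk V n (measurableSet_Ioc)
    (fun x hx => ⟨hx.1.le, hx.2⟩ : s2 ⊆ Icc (n : ℝ) ((n : ℝ) + 1))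
  have hc3 := chunk V (n + 1) (measurableSet_Ioc)
    (by rw [show (((n : ℤ) + 1 : ℤ) : ℝ) = (n : ℝ) + 1 by push_cast; ring]
        intro x hx
        exact ⟨hx.1.le, by rw [show (n : ℝ) + 1 + 1 = (n : ℝ) + 2 by ring]; exact hx.2⟩ :
      s3 ⊆ Icc (((n : ℤ) + 1 : ℤ) : ℝ) ((((n : ℤ) + 1 : ℤ) : ℝ) + 1))
  have hc4 := chunk V (n + 2) (measurableSet_Ioo)
    (by rw [show (((n : ℤ) + 2 : ℤ) : ℝ) = (n : ℝ) + 2 by push_cast; ring]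
        intro x hx
        exact ⟨hx.1.le, by rw [show (n : ℝ) + 2 + 1 = (n : ℝ) + 3 by ring]; exact hx.2.le⟩ :
      s4 ⊆ Icc (((n : ℤ) + 2 : ℤ) : ℝ) ((((n : ℤ) + 2 : ℤ) : ℝ) + 1))
  have hg : MemLp (S.indicator (recon V)) q (volume : Measure ℝ) := by
    rw [hSeq, Set.indicator_union_of_disjoint hd1234,
      Set.indicator_union_of_disjoint hd123, Set.indicator_union_of_disjoint hd12]
    exact ((hc1.1.add hc2.1).add hc3.1).add hc4.1
  set G : Lp X q (volume : Measure ℝ) := hg.toLp _ with hG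
  set gmap : ℝ → C(ℝ, ℝ) := fun r => ContinuousMap.mk (fun x => r + x) (by continuity) with hgm
  have hgmc : Continuous gmap :=
    ContinuousMap.continuous_of_continuous_uncurry _ (by exact continuous_add)
  set T : ℝ → Lp X q (volume : Measure ℝ) := fun r =>
    Lp.compMeasurePreserving (gmap r) (measurePreserving_add_left volume r) G with hT
  have hTc : Continuous T :=
    Continuous.compMeasurePreservingLp continuous_const hgmc
      (fun r => measurePreserving_add_left volume r) hq
  set R : Lp X q (volume : Measure ℝ) → Lp X q (volume.restrict (Ioo (0:ℝ) 1)) := fun F =>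
    ((Lp.memLp F).mono_measure Measure.restrict_le_self).toLp ⇑F with hR
  have hRlip : LipschitzWith 1 R := by
    refine LipschitzWith.of_edist_le fun F F' => ?_
    rw [hR]
    rw [Lp.edist_toLp_toLp, Lp.edist_def]
    exact eLpNorm_mono_measure _ Measure.restrict_le_self
  have hloc : ∀ t ∈ Metric.ball t₀ (1 / 2), R (T t) = reconLp V t := by
    intro t ht
    have hd := Metric.mem_ball.1 ht
    rw [Real.dist_eq] at hd
    have hd' := abs_lt.1 hd
    have h1 : ⇑(T t) =ᵐ[(volume : Measure ℝ)] (⇑G ∘ fun x => t + x) :=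
      Lp.coeFn_compMeasurePreserving G _
    have h2 : ⇑G =ᵐ[(volume : Measure ℝ)] S.indicator (recon V) := MemLp.coeFn_toLp hg
    have hmp := measurePreserving_add_left (volume : Measure ℝ) t
    have h2'' : ∀ᵐ x ∂(volume : Measure ℝ), ⇑G (t + x) = S.indicator (recon V) (t + x) :=
      ae_of_ae_map (p := fun y => ⇑G y = S.indicator (recon V) y) hmp.aemeasurable
        (by rw [hmp.map_eq]; exact h2)
    have h2' : (⇑G ∘ fun x => t + x)
        =ᵐ[(volume : Measure ℝ)] (S.indicator (recon V) ∘ fun x => t + x) := h2''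
    have h3 : ⇑(T t) =ᵐ[(volume.restrict (Ioo (0:ℝ) 1))] fun θ : ℝ => recon V (t + θ) := by
      have h4 : ⇑(T t) =ᵐ[(volume.restrict (Ioo (0:ℝ) 1))] (S.indicator (recon V) ∘ fun x => t + x) :=
        (h1.trans h2').filter_mono (ae_mono Measure.restrict_le_self)
      refine h4.trans ?_
      refine (ae_restrict_iff' measurableSet_Ioo).2 (Eventually.of_forall fun θ hθ => ?_)
      have hmem : t + θ ∈ S := by
        simp only [hS, mem_Ioo]
        constructor
        · linarith [hθ.1, hd'.1, hn1]
        · linarith [hθ.2, hd'.2, hn2]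
      simp only [Function.comp, Set.indicator_of_mem hmem]
    exact MemLp.toLp_congr _ _ h3
  have hcont : Continuous fun t => R (T t) := hRlip.continuous.comp hTc
  refine hcont.continuousAt.congr ?_
  refine Filter.eventuallyEq_of_mem (Metric.ball_mem_nhds t₀ (by norm_num : (0:ℝ) < 1/2))
    fun t ht => ?_
  exact (hloc t ht)

end BochnerAux

end BochnerAux

/-- The range of the Bochner transform `B : BS^p(ℝ,X) → BC(ℝ, L^p(0,1;X))` is a closed
subspace admitting the topological complement
`M = {V ∈ BC(ℝ,L^p(0,1;X)) : V(n) = 0 for all n ∈ ℤ}`: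
`BC(ℝ, L^p(0,1;X)) = Im(B) ⊕ M`. -/
theorem stmt_7 (q : ℝ≥0∞) [Fact (1 ≤ q)] (hq : q ≠ ⊤)
    (ImB : Set (BoundedContinuousFunction ℝ (Lp X q (volume.restrict (Ioo (0:ℝ) 1)))))
    (hImB : ImB = {V | ∃ (u : ℝ → X)
      (h : ∀ t : ℝ, MemLp (fun θ => u (t + θ)) q (volume.restrict (Ioo (0:ℝ) 1))),
      ∀ t : ℝ, V t = (h t).toLp (fun θ => u (t + θ))})
    (M : Set (BoundedContinuousFunction ℝ (Lp X q (volume.restrict (Ioo (0:ℝ) 1)))))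
    (hM : M = {V | ∀ n : ℤ, V (n : ℝ) = 0}) :
    IsClosed ImB ∧ IsClosed M ∧
      (∀ V, ∃ W ∈ ImB, ∃ Z ∈ M, V = W + Z) ∧
      (∀ V ∈ ImB, V ∈ M → V = 0) := by
  subst hImB hM
  -- characterization of the range of the Bochner transform
  have hchar : ∀ V : BoundedContinuousFunction ℝ (Lp X q (volume.restrict (Ioo (0:ℝ) 1))),
      (∃ (u : ℝ → X)
        (h : ∀ t : ℝ, MemLp (fun θ => u (t + θ)) q (volume.restrict (Ioo (0:ℝ) 1))),
        ∀ t : ℝ, V t = (h t).toLp (fun θ => u (t + θ))) ↔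
      ∀ t : ℝ, V t = BochnerAux.reconLp (fun r => V r) t := by
    intro V
    constructor
    · rintro ⟨u, h, hu⟩ t
      have hcoe : ∀ n : ℤ, (fun θ : ℝ => u ((n : ℝ) + θ))
          =ᵐ[volume.restrict (Ioo (0:ℝ) 1)] ⇑(V ((n : ℤ) : ℝ)) := by
        intro n
        rw [hu ((n : ℤ) : ℝ)]
        exact (MemLp.coeFn_toLp (h ((n : ℤ) : ℝ))).symm
      have h5 := BochnerAux.recon_ae (fun r => V r) u hcoe
      have h6 := BochnerAux.ae_shift h5 t
      rw [hu t]
      exact MemLp.toLp_congr (h t) (BochnerAux.recon_shift_memℒp _ t) h6.symm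
    · intro hV
      exact ⟨BochnerAux.recon (fun r => V r),
        fun t => BochnerAux.recon_shift_memℒp _ t, hV⟩
  -- continuity of V ↦ reconLp V t
  have hΦcont : ∀ t : ℝ, Continuous fun
      V : BoundedContinuousFunction ℝ (Lp X q (volume.restrict (Ioo (0:ℝ) 1))) =>
      BochnerAux.reconLp (fun r => V r) t := by
    intro t
    refine (LipschitzWith.of_dist_le_mul (K := 2) fun V V' => ?_).continuous
    have h1 := BochnerAux.reconLp_edist (fun r => V r) (fun r => V' r) t
    have hpt : ∀ x : ℝ, edist (V x) (V' x) ≤ edist V V' := fun x => by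
      rw [edist_dist, edist_dist]
      exact ENNReal.ofReal_le_ofReal (BoundedContinuousFunction.dist_coe_le_dist x)
    have h2 : edist (BochnerAux.reconLp (fun r => V r) t)
        (BochnerAux.reconLp (fun r => V' r) t) ≤ 2 * edist V V' := by
      refine h1.trans ?_
      rw [two_mul]
      exact add_le_add (hpt _) (hpt _)
    have hfin : (2 : ℝ≥0∞) * edist V V' ≠ ∞ :=
      ENNReal.mul_ne_top (by norm_num) (edist_ne_top V V')
    rw [dist_edist, dist_edist]
    calc (edist (BochnerAux.reconLp (fun r => V r) t)
          (BochnerAux.reconLp (fun r => V' r) t)).toReal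
        ≤ ((2 : ℝ≥0∞) * edist V V').toReal := ENNReal.toReal_mono hfin h2
      _ = 2 * (edist V V').toReal := by
          rw [ENNReal.toReal_mul]
          norm_num
  refine ⟨?_, ?_, ?_, ?_⟩
  · -- ImB is closed
    have hImBeq : {V : BoundedContinuousFunction ℝ (Lp X q (volume.restrict (Ioo (0:ℝ) 1))) |
        ∃ (u : ℝ → X)
        (h : ∀ t : ℝ, MemLp (fun θ => u (t + θ)) q (volume.restrict (Ioo (0:ℝ) 1))),
        ∀ t : ℝ, V t = (h t).toLp (fun θ => u (t + θ))} =
        ⋂ t : ℝ, {V | V t = BochnerAux.reconLp (fun r => V r) t} := by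
      ext V
      simpa [Set.mem_iInter] using hchar V
    rw [hImBeq]
    exact isClosed_iInter fun t =>
      isClosed_eq (BoundedContinuousFunction.lipschitz_eval_const _).continuous (hΦcont t)
  · -- M is closed
    have hMeq : {V : BoundedContinuousFunction ℝ (Lp X q (volume.restrict (Ioo (0:ℝ) 1))) |
        ∀ n : ℤ, V (n : ℝ) = 0} = ⋂ n : ℤ, {V | V ((n : ℤ) : ℝ) = 0} := by
      ext V
      simp [Set.mem_iInter]
    rw [hMeq]
    exact isClosed_iInter fun n =>
      isClosed_eq (BoundedContinuousFunction.lipschitz_eval_const _).continuous continuous_const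
  · -- decomposition
    intro V
    have hWc : Continuous fun t => BochnerAux.reconLp (fun r => V r) t :=
      BochnerAux.reconLp_continuous hq _
    have hWb : ∀ t : ℝ, ‖BochnerAux.reconLp (fun r => V r) t‖ ≤ ‖V‖ + ‖V‖ := fun t =>
      (BochnerAux.reconLp_norm_le _ t).trans
        (add_le_add (V.norm_coe_le_norm _) (V.norm_coe_le_norm _))
    set W := BoundedContinuousFunction.ofNormedAddCommGroup _ hWc (‖V‖ + ‖V‖) hWb with hW
    have hWapp : ∀ t : ℝ, W t = BochnerAux.reconLp (fun r => V r) t := fun t => rfl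
    refine ⟨W, ⟨BochnerAux.recon (fun r => V r),
      fun t => BochnerAux.recon_shift_memℒp _ t, fun t => hWapp t⟩, V - W, fun n => ?_, by abel⟩
    have hWn : W ((n : ℤ) : ℝ) = V ((n : ℤ) : ℝ) :=
      (hWapp _).trans (BochnerAux.reconLp_int (fun r => V r) n)
    rw [BoundedContinuousFunction.sub_apply, hWn, sub_self]
  · -- trivial intersection
    intro V hV hM0
    have hchar' := (hchar V).1 hV
    have h0 : BochnerAux.recon (fun r => V r) =ᵐ[(volume : Measure ℝ)] fun _ => (0 : X) := by
      refine BochnerAux.recon_ae _ _ fun n => ?_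
      rw [hM0 n]
      exact (Lp.coeFn_zero X q _).symm
    refine BoundedContinuousFunction.ext fun t => ?_
    simp only [BoundedContinuousFunction.coe_zero, Pi.zero_apply]
    rw [hchar' t]
    have h6 : (fun θ : ℝ => BochnerAux.recon (fun r => V r) (t + θ))
        =ᵐ[volume.restrict (Ioo (0:ℝ) 1)] (0 : ℝ → X) := BochnerAux.ae_shift h0 t
    exact (MemLp.toLp_congr (BochnerAux.recon_shift_memℒp _ t) (MemLp.zero : MemLp (0 : ℝ → X) q (volume.restrict (Ioo (0:ℝ) 1))) h6).trans
      (MemLp.toLp_zero _)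
end

section
/- If $\mathcal{K}$ is a compact subset of $AA(\mathbb{R},E)$ (with the sup norm), then the set $S = \{U(t) : U \in \mathcal{K}, t \in \mathbb{R}\}$ is relatively compact in $E$. -/
open MeasureTheory Set Filter Topology
open scoped ENNReal

variable {X : Type*} [NormedAddCommGroup X]

lemma my_totallyBounded_of_cauchy_subseq {α : Type*} [PseudoMetricSpace α] {s : Set α}
    (h : ∀ u : ℕ → α, (∀ n, u n ∈ s) → ∃ φ : ℕ → ℕ, StrictMono φ ∧ CauchySeq (u ∘ φ)) :
    TotallyBounded s := by
  by_contra hs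
  rw [Metric.totallyBounded_iff] at hs
  push_neg at hs
  obtain ⟨ε, hε, hnet⟩ := hs
  have key : ∀ t : Finset α, ∃ x ∈ s, ∀ y ∈ t, ε ≤ dist x y := by
    intro t
    obtain ⟨x, hxs, hx⟩ := not_subset.1 (hnet (↑t) t.finite_toSet)
    refine ⟨x, hxs, fun y hy => ?_⟩
    by_contra hlt
    exact hx (Set.mem_biUnion hy (Metric.mem_ball.2 (lt_of_not_ge hlt)))
  choose f hf1 hf2 using key
  haveI := Classical.decEq α
  let T : ℕ → Finset α := fun n => Nat.rec ∅ (fun _ t => insert (f t) t) n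
  let u : ℕ → α := fun n => f (T n)
  have hTmono : ∀ m n, m ≤ n → T m ⊆ T n := by
    intro m n hmn
    induction n with
    | zero => simp_all
    | succ n ih =>
      rcases Nat.lt_or_ge m (n+1) with h' | h'
      · exact (ih (Nat.lt_succ_iff.1 h')).trans (Finset.subset_insert _ _)
      · have : m = n + 1 := le_antisymm hmn h'
        simp [this]
  have hmem : ∀ m n, m < n → u m ∈ T n := by
    intro m n hmn
    have : u m ∈ T (m + 1) := Finset.mem_insert_self _ _
    exact hTmono (m+1) n hmn this
  have hsep : ∀ m n, m < n → ε ≤ dist (u n) (u m) :=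
    fun m n hmn => hf2 (T n) (u m) (hmem m n hmn)
  obtain ⟨φ, hφ, hcs⟩ := h u (fun n => hf1 (T n))
  rw [Metric.cauchySeq_iff] at hcs
  obtain ⟨N, hN⟩ := hcs ε hε
  have h1 := hN (N+1) (by omega) N (by omega)
  have h2 := hsep (φ N) (φ (N+1)) (hφ (by omega))
  simp only [Function.comp] at h1
  linarith

lemma my_aa_range_tb {E : Type*} [NormedAddCommGroup E] {v : ℝ → E}
    (h : IsAlmostAutomorphic v) : TotallyBounded (Set.range v) := by
  apply my_totallyBounded_of_cauchy_subseq
  intro u hu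
  choose t ht using hu
  obtain ⟨φ, hφ, w, h1, -⟩ := h.2 t
  refine ⟨φ, hφ, ?_⟩
  have h0 := h1 0
  simp only [zero_add] at h0
  have : Tendsto (fun k => u (φ k)) atTop (𝓝 (w 0)) := by simpa only [ht] using h0
  exact this.cauchySeq

/-- If `𝒦` is a compact subset of `AA(ℝ,E)` (with the sup norm), then
`S = {U(t) : U ∈ 𝒦, t ∈ ℝ}` is relatively compact in `E`. -/
theorem stmt_9 {E : Type*} [NormedAddCommGroup E] [CompleteSpace E]
    (𝒦 : Set (BoundedContinuousFunction ℝ E)) (hc : IsCompact 𝒦)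
    (hAA : ∀ U ∈ 𝒦, IsAlmostAutomorphic (fun t => U t)) :
    IsCompact (closure {x : E | ∃ U ∈ 𝒦, ∃ t : ℝ, U t = x}) := by
  have hS : TotallyBounded {x : E | ∃ U ∈ 𝒦, ∃ t : ℝ, U t = x} := by
    rw [Metric.totallyBounded_iff]
    intro ε hε
    obtain ⟨F, hF𝒦, hFfin, hcov⟩ := hc.elim_finite_subcover_image
      (fun U (_ : U ∈ 𝒦) => Metric.isOpen_ball (x := U) (ε := ε/3))
      (fun U hU => Set.mem_biUnion hU (Metric.mem_ball_self (by linarith)))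
    have hnet : ∀ U : BoundedContinuousFunction ℝ E, ∃ N : Set E, N.Finite ∧
        (U ∈ 𝒦 → Set.range (fun t : ℝ => U t) ⊆ ⋃ y ∈ N, Metric.ball y (ε/3)) := by
      intro U
      by_cases hU : U ∈ 𝒦
      · obtain ⟨N, hNfin, hNcov⟩ :=
          (Metric.totallyBounded_iff.1 (my_aa_range_tb (hAA U hU))) (ε/3) (by linarith)
        exact ⟨N, hNfin, fun _ => hNcov⟩
      · exact ⟨∅, Set.finite_empty, fun h => absurd h hU⟩
    choose N hNfin hNcov using hnet
    refine ⟨⋃ U ∈ F, N U, hFfin.biUnion (fun U _ => hNfin U), ?_⟩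
    rintro x ⟨U, hU𝒦, t, rfl⟩
    obtain ⟨V, hVF, hUV⟩ := Set.mem_iUnion₂.1 (hcov hU𝒦)
    have h1 : dist (U t) (V t) ≤ dist U V := BoundedContinuousFunction.dist_coe_le_dist t
    have h2 : dist U V < ε/3 := Metric.mem_ball.1 hUV
    obtain ⟨y, hyN, hVy⟩ := Set.mem_iUnion₂.1 (hNcov V (hF𝒦 hVF) ⟨t, rfl⟩)
    have h3 : dist (V t) y < ε/3 := Metric.mem_ball.1 hVy
    refine Set.mem_biUnion (Set.mem_biUnion hVF hyN) ?_
    have := dist_triangle (U t) (V t) y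
    exact Metric.mem_ball.2 (by linarith)
  exact TotallyBounded.isCompact_of_isClosed (totallyBounded_closure.2 hS) isClosed_closure
end

section
/- Let $u, u_k \in BS^p(\mathbb{R},X)$ for all $k\in\mathbb{N}$, and suppose the family $\{u_k : k\in\mathbb{N}\}$ is Stepanov $p$-uniformly integrable. Then $\lim_{k\to\infty}\|u_k - u\|_{S^p} = 0$ if and only if for every $\varepsilon>0$, $\lim_{k\to\infty}\sup_{t\in\mathbb{R}} \mathrm{meas}\{s\in(t,t+1) : \|u_k(s)-u(s)\| \ge \varepsilon\} = 0$. -/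
open MeasureTheory Set Filter Topology
open scoped ENNReal

variable {X : Type*} [NormedAddCommGroup X]

namespace Stmt12Aux

lemma cont_rpow {p : ℝ} (hp : 1 ≤ p) : Continuous fun x : ℝ => x ^ p := by
  rw [continuous_iff_continuousAt]
  exact fun x => Real.continuousAt_rpow_const x p (Or.inr (by linarith))

lemma SIntegral_eq (p : ℝ) (u : ℝ → X) (t : ℝ) :
    SIntegral p u t = ∫ s in Ioo t (t+1), ‖u s‖ ^ p := by
  have h1 := (measurePreserving_add_left volume t).setIntegral_preimage_emb
    (measurableEmbedding_addLeft t) (fun s => ‖u s‖ ^ p) (Ioo t (t+1))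
  simpa [SIntegral] using h1

lemma SIntegral_nonneg (p : ℝ) (u : ℝ → X) (t : ℝ) : 0 ≤ SIntegral p u t :=
  setIntegral_nonneg measurableSet_Ioo (fun _ _ => Real.rpow_nonneg (norm_nonneg _) p)

lemma aesm_norm_rpow {p : ℝ} (hp : 1 ≤ p) {u : ℝ → X} (hu : AEStronglyMeasurable u volume) :
    AEStronglyMeasurable (fun s => ‖u s‖ ^ p) volume :=
  (cont_rpow hp).comp_aestronglyMeasurable hu.norm

lemma aemeas_ofReal_norm_rpow {p : ℝ} (hp : 1 ≤ p) {u : ℝ → X}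
    (hu : AEStronglyMeasurable u volume) (μ : Measure ℝ) (hμ : μ ≤ volume) :
    AEMeasurable (fun s => ENNReal.ofReal (‖u s‖ ^ p)) μ :=
  ENNReal.measurable_ofReal.comp_aemeasurable
    ((aesm_norm_rpow hp hu).aemeasurable.mono_measure hμ)

lemma integrableOn_norm_rpow {p : ℝ} {u : ℝ → X} (hu : MemLploc p u) (t : ℝ) :
    IntegrableOn (fun s => ‖u s‖ ^ p) (Ioo t (t+1)) volume :=
  (hu.2.integrableOn_isCompact isCompact_Icc).mono_set Ioo_subset_Icc_self

lemma norm_sub_rpow_le {p : ℝ} (hp : 1 ≤ p) (a b : X) :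
    ‖a - b‖ ^ p ≤ 2 ^ p * (‖a‖ ^ p + ‖b‖ ^ p) := by
  have hp0 : (0:ℝ) ≤ p := by linarith
  have h1 : ‖a - b‖ ≤ 2 * max ‖a‖ ‖b‖ := by
    calc ‖a - b‖ ≤ ‖a‖ + ‖b‖ := norm_sub_le a b
    _ ≤ 2 * max ‖a‖ ‖b‖ := by
        rcases le_total ‖a‖ ‖b‖ with h | h <;> simp [max_eq_right, max_eq_left, h] <;> linarith
  calc ‖a - b‖ ^ p ≤ (2 * max ‖a‖ ‖b‖) ^ p := Real.rpow_le_rpow (norm_nonneg _) h1 hp0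
  _ = 2 ^ p * (max ‖a‖ ‖b‖) ^ p := Real.mul_rpow (by norm_num) (le_max_of_le_left (norm_nonneg _))
  _ ≤ 2 ^ p * (‖a‖ ^ p + ‖b‖ ^ p) := by
      gcongr
      rcases le_total ‖a‖ ‖b‖ with h | h
      · rw [max_eq_right h]
        nlinarith [Real.rpow_nonneg (norm_nonneg a) p]
      · rw [max_eq_left h]
        nlinarith [Real.rpow_nonneg (norm_nonneg b) p]

lemma integrableOn_diff_rpow {p : ℝ} (hp : 1 ≤ p) {u v : ℝ → X}
    (hu : MemLploc p u) (hv : MemLploc p v) (t : ℝ) :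
    IntegrableOn (fun s => ‖u s - v s‖ ^ p) (Ioo t (t+1)) volume := by
  apply Integrable.mono'
    (((integrableOn_norm_rpow hu t).add (integrableOn_norm_rpow hv t)).const_mul (2^p))
    ((aesm_norm_rpow hp (hu.1.sub hv.1)).restrict)
  filter_upwards with s
  rw [Real.norm_of_nonneg (Real.rpow_nonneg (norm_nonneg _) p)]
  exact norm_sub_rpow_le hp (u s) (v s)

lemma SNorm_nonneg (p : ℝ) (u : ℝ → X) : 0 ≤ SNorm p u :=
  Real.iSup_nonneg fun t => Real.rpow_nonneg (SIntegral_nonneg p u t) _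

lemma SIntegral_le_SNorm_rpow {p : ℝ} (hp : 1 ≤ p) {u : ℝ → X}
    (hB : BddAbove (Set.range (SIntegral p u))) (t : ℝ) :
    SIntegral p u t ≤ SNorm p u ^ p := by
  have hp0 : p ≠ 0 := by linarith
  have hBB : BddAbove (Set.range fun t => SIntegral p u t ^ (1/p)) := by
    obtain ⟨M, hM⟩ := hB
    refine ⟨M ^ (1/p), ?_⟩
    rintro x ⟨t, rfl⟩
    exact Real.rpow_le_rpow (SIntegral_nonneg p u t) (hM ⟨t, rfl⟩) (by positivity)
  have h1 : SIntegral p u t ^ (1/p) ≤ SNorm p u := le_ciSup hBB t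
  calc SIntegral p u t = (SIntegral p u t ^ (1/p)) ^ p := by
        rw [← Real.rpow_mul (SIntegral_nonneg p u t)]
        simp [one_div, inv_mul_cancel₀ hp0]
  _ ≤ SNorm p u ^ p :=
      Real.rpow_le_rpow (Real.rpow_nonneg (SIntegral_nonneg p u t) _) h1 (by linarith)

lemma SNorm_le_of_SIntegral_le {p : ℝ} (hp : 1 ≤ p) {u : ℝ → X} {c : ℝ} (hc : 0 ≤ c)
    (h : ∀ t, SIntegral p u t ≤ c ^ p) : SNorm p u ≤ c := by
  have hp0 : p ≠ 0 := by linarith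
  apply ciSup_le
  intro t
  calc SIntegral p u t ^ (1/p) ≤ (c ^ p) ^ (1/p) :=
        Real.rpow_le_rpow (SIntegral_nonneg p u t) (h t) (by positivity)
  _ = c := by
      rw [← Real.rpow_mul hc]
      simp [one_div, mul_inv_cancel₀ hp0]

lemma chebyshev {p : ℝ} (hp : 1 ≤ p) {v : ℝ → X} (hv : AEStronglyMeasurable v volume)
    (t : ℝ) (hi : IntegrableOn (fun s => ‖v s‖ ^ p) (Ioo t (t+1)) volume)
    {ε : ℝ} (hε : 0 < ε) :
    volume {s ∈ Ioo t (t+1) | ε ≤ ‖v s‖} ≤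
      ENNReal.ofReal ((∫ s in Ioo t (t+1), ‖v s‖ ^ p) / ε ^ p) := by
  have hp0 : (0:ℝ) < p := by linarith
  set μt := volume.restrict (Ioo t (t+1)) with hμt
  have haem : AEMeasurable (fun s => ENNReal.ofReal (‖v s‖ ^ p)) μt :=
    aemeas_ofReal_norm_rpow hp hv μt Measure.restrict_le_self
  have key := mul_meas_ge_le_lintegral₀ haem (ENNReal.ofReal (ε ^ p))
  have hseteq : {s | ENNReal.ofReal (ε ^ p) ≤ ENNReal.ofReal (‖v s‖ ^ p)} = {s | ε ≤ ‖v s‖} := by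
    ext s
    simp only [mem_setOf_eq]
    rw [ENNReal.ofReal_le_ofReal_iff (Real.rpow_nonneg (norm_nonneg _) p)]
    constructor
    · intro h
      by_contra hlt
      push_neg at hlt
      exact absurd h (not_le.2 (Real.rpow_lt_rpow (norm_nonneg _) hlt hp0))
    · intro h
      exact Real.rpow_le_rpow hε.le h hp0.le
  rw [hseteq] at key
  have hlint : ∫⁻ a, ENNReal.ofReal (‖v a‖ ^ p) ∂μt
      = ENNReal.ofReal (∫ s in Ioo t (t+1), ‖v s‖ ^ p) := by
    rw [← ofReal_integral_eq_lintegral_ofReal hi]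
    filter_upwards with s using Real.rpow_nonneg (norm_nonneg _) p
  rw [hlint] at key
  have hset2 : {s ∈ Ioo t (t+1) | ε ≤ ‖v s‖} = {s | ε ≤ ‖v s‖} ∩ Ioo t (t+1) := by
    ext s; simp [mem_setOf_eq, and_comm]
  rw [hset2, ← Measure.restrict_apply' measurableSet_Ioo]
  have hεp : ENNReal.ofReal (ε ^ p) ≠ 0 := by
    simp [ENNReal.ofReal_eq_zero, not_le, Real.rpow_pos_of_pos hε]
  rw [ENNReal.ofReal_div_of_pos (Real.rpow_pos_of_pos hε p),
    ENNReal.le_div_iff_mul_le (Or.inl hεp) (Or.inl ENNReal.ofReal_ne_top), mul_comm]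
  exact key

lemma bddAbove_diff {p : ℝ} (hp : 1 ≤ p) {u v : ℝ → X}
    (hu : MemBSp p u) (hv : MemBSp p v) :
    BddAbove (Set.range (SIntegral p (fun s => u s - v s))) := by
  obtain ⟨M, hM⟩ := hu.2
  obtain ⟨N, hN⟩ := hv.2
  refine ⟨2 ^ p * (M + N), ?_⟩
  rintro x ⟨t, rfl⟩
  have h1 : SIntegral p (fun s => u s - v s) t
      ≤ 2 ^ p * (SIntegral p u t + SIntegral p v t) := by
    rw [SIntegral_eq, SIntegral_eq, SIntegral_eq, ← integral_add
      (integrableOn_norm_rpow hu.1 t) (integrableOn_norm_rpow hv.1 t),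
      ← integral_const_mul]
    apply setIntegral_mono_on (integrableOn_diff_rpow hp hu.1 hv.1 t)
      ((((integrableOn_norm_rpow hu.1 t).add (integrableOn_norm_rpow hv.1 t)).const_mul (2^p)))
      measurableSet_Ioo
    exact fun s _ => norm_sub_rpow_le hp (u s) (v s)
  refine h1.trans ?_
  have h2 := add_le_add (hM ⟨t, rfl⟩) (hN ⟨t, rfl⟩)
  exact mul_le_mul_of_nonneg_left h2 (by positivity)

lemma limit_UI {p : ℝ} (hp : 1 ≤ p) {u : ℝ → X} {uk : ℕ → ℝ → X}
    (hu : AEStronglyMeasurable u volume)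
    (huki : ∀ k t, IntegrableOn (fun s => ‖uk k s‖ ^ p) (Ioo t (t+1)) volume)
    (H : ∀ ε > (0:ℝ), Tendsto
      (fun k => ⨆ t : ℝ, volume {s ∈ Ioo t (t + 1) | ε ≤ ‖uk k s - u s‖})
      atTop (𝓝 (0 : ℝ≥0∞)))
    {δ c : ℝ} (hc : 0 ≤ c)
    (hδuk : ∀ k (t : ℝ) (E : Set ℝ), MeasurableSet E → E ⊆ Ioo t (t+1) →
      volume E ≤ ENNReal.ofReal δ → (∫ s in E, ‖uk k s‖ ^ p) ≤ c)
    (t : ℝ) (E : Set ℝ) (hE : MeasurableSet E) (hsub : E ⊆ Ioo t (t+1))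
    (hvol : volume E ≤ ENNReal.ofReal δ) :
    (∫ s in E, ‖u s‖ ^ p) ≤ c := by
  set μt := volume.restrict (Ioo t (t+1)) with hμt
  have htim : TendstoInMeasure μt uk atTop u := by
    rw [tendstoInMeasure_iff_dist]
    intro ε' hε'
    apply tendsto_of_tendsto_of_tendsto_of_le_of_le tendsto_const_nhds (H ε' hε')
      (fun i => zero_le)
    intro i
    dsimp only
    rw [Measure.restrict_apply' measurableSet_Ioo]
    refine le_trans (measure_mono ?_) (le_iSup (fun t' => volume
      {s ∈ Ioo t' (t' + 1) | ε' ≤ ‖uk i s - u s‖}) t)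
    rintro x ⟨hx1, hx2⟩
    exact ⟨hx2, by simpa [dist_eq_norm] using hx1⟩
  obtain ⟨ns, hns, hae⟩ := htim.exists_seq_tendsto_ae
  have haeE : ∀ᵐ x ∂(volume.restrict E), Tendsto (fun j => uk (ns j) x) atTop (𝓝 (u x)) :=
    ae_mono (Measure.restrict_mono hsub le_rfl) hae
  have hcont : Continuous fun y : X => ENNReal.ofReal (‖y‖ ^ p) :=
    ENNReal.continuous_ofReal.comp ((cont_rpow hp).comp continuous_norm)
  have hlim : ∀ᵐ x ∂(volume.restrict E), ENNReal.ofReal (‖u x‖ ^ p)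
      = liminf (fun j => ENNReal.ofReal (‖uk (ns j) x‖ ^ p)) atTop := by
    filter_upwards [haeE] with x hx
    exact ((hcont.continuousAt.tendsto.comp hx).liminf_eq).symm
  have hmeas : ∀ j, AEMeasurable (fun s => ENNReal.ofReal (‖uk (ns j) s‖ ^ p))
      (volume.restrict E) := fun j =>
    ENNReal.measurable_ofReal.comp_aemeasurable
      ((huki (ns j) t).mono_set hsub).aestronglyMeasurable.aemeasurable
  have key : (∫⁻ x in E, ENNReal.ofReal (‖u x‖ ^ p)) ≤ ENNReal.ofReal c := by
    calc (∫⁻ x in E, ENNReal.ofReal (‖u x‖ ^ p))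
        = ∫⁻ x in E, liminf (fun j => ENNReal.ofReal (‖uk (ns j) x‖ ^ p)) atTop :=
          lintegral_congr_ae hlim
    _ ≤ liminf (fun j => ∫⁻ x in E, ENNReal.ofReal (‖uk (ns j) x‖ ^ p)) atTop :=
          lintegral_liminf_le' hmeas
    _ ≤ liminf (fun _ : ℕ => ENNReal.ofReal c) atTop := by
          refine liminf_le_liminf ?_ (by isBoundedDefault) (by isBoundedDefault)
          filter_upwards with j
          rw [← ofReal_integral_eq_lintegral_ofReal ((huki (ns j) t).mono_set hsub)
            (Filter.Eventually.of_forall fun s => Real.rpow_nonneg (norm_nonneg _) p)]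
          exact ENNReal.ofReal_le_ofReal (hδuk (ns j) t E hE hsub hvol)
    _ = ENNReal.ofReal c := liminf_const _
  rw [integral_eq_lintegral_of_nonneg_ae
    (Filter.Eventually.of_forall fun s => Real.rpow_nonneg (norm_nonneg _) p)
    (((cont_rpow hp).comp_aestronglyMeasurable hu.norm).restrict)]
  exact ENNReal.toReal_le_of_le_ofReal hc key

end Stmt12Aux

open Stmt12Aux in
/-- Let `u, uₖ ∈ BS^p(ℝ,X)` with `{uₖ}` Stepanov `p`-uniformly integrable. Then
`‖uₖ - u‖_{S^p} → 0` iff for every `ε > 0`,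
`sup_t meas{s ∈ (t,t+1) : ‖uₖ(s) - u(s)‖ ≥ ε} → 0` as `k → ∞`. -/
theorem stmt_12 (p : ℝ) (hp : 1 ≤ p) (u : ℝ → X) (uk : ℕ → ℝ → X)
    (hu : MemBSp p u) (huk : ∀ k, MemBSp p (uk k))
    (hUI : StepanovUI p (Set.range uk)) :
    Tendsto (fun k => SNorm p (fun t => uk k t - u t)) atTop (𝓝 0) ↔
      ∀ ε > (0:ℝ), Tendsto
        (fun k => ⨆ t : ℝ, volume {s ∈ Ioo t (t + 1) | ε ≤ ‖uk k s - u s‖})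
        atTop (𝓝 (0 : ℝ≥0∞)) := by
  have hp0 : (0:ℝ) < p := by linarith
  constructor
  · intro h ε hε
    -- upper bound sequence
    have hbound : ∀ k, (⨆ t : ℝ, volume {s ∈ Ioo t (t + 1) | ε ≤ ‖uk k s - u s‖})
        ≤ ENNReal.ofReal ((SNorm p (fun s => uk k s - u s)) ^ p / ε ^ p) := by
      intro k
      apply iSup_le
      intro t
      refine (chebyshev hp ((huk k).1.1.sub hu.1.1) t
        (integrableOn_diff_rpow hp (huk k).1 hu.1 t) hε).trans ?_
      rw [← SIntegral_eq]
      apply ENNReal.ofReal_le_ofReal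
      gcongr
      exact SIntegral_le_SNorm_rpow hp (bddAbove_diff hp (huk k) hu) t
    -- squeeze
    have hup : Tendsto (fun k => ENNReal.ofReal ((SNorm p (fun s => uk k s - u s)) ^ p / ε ^ p))
        atTop (𝓝 0) := by
      have h1 : Tendsto (fun k => (SNorm p (fun s => uk k s - u s)) ^ p / ε ^ p) atTop (𝓝 0) := by
        have h2 : Tendsto (fun k => (SNorm p (fun s => uk k s - u s)) ^ p) atTop (𝓝 0) := by
          have h3 := (cont_rpow hp).continuousAt (x := (0:ℝ))
          have h4 := h3.tendsto.comp h
          simpa [Function.comp_def, Real.zero_rpow (by linarith : p ≠ 0)] using h4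
        simpa using h2.div_const (ε ^ p)
      have := (ENNReal.continuous_ofReal.continuousAt (x := (0:ℝ))).tendsto.comp h1
      simpa [Function.comp_def] using this
    exact tendsto_of_tendsto_of_tendsto_of_le_of_le tendsto_const_nhds hup
      (fun k => zero_le) hbound
  · intro H
    rw [NormedAddCommGroup.tendsto_nhds_zero]
    intro ε hε
    set η : ℝ := (ε/2) ^ p with hηdef
    have hη : 0 < η := Real.rpow_pos_of_pos (by linarith) p
    have h2p : (0:ℝ) < 2 ^ p := Real.rpow_pos_of_pos two_pos p
    have hc : 0 < η / (3 * 2 ^ p) := by positivity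
    obtain ⟨δ, hδ, hδuk'⟩ := hUI (η / (3 * 2 ^ p)) hc
    have hδuk : ∀ k (t : ℝ) (E : Set ℝ), MeasurableSet E → E ⊆ Ioo t (t+1) →
        volume E ≤ ENNReal.ofReal δ → (∫ s in E, ‖uk k s‖ ^ p) ≤ η / (3 * 2^p) :=
      fun k t E hE hs hv => hδuk' (uk k) ⟨k, rfl⟩ t E hE hs hv
    have hUIu := limit_UI hp hu.1.1 (fun k t => integrableOn_norm_rpow (huk k).1 t)
      H hc.le hδuk
    set ε₁ : ℝ := (η/3) ^ (1/p) with hε₁def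
    have hε₁ : 0 < ε₁ := Real.rpow_pos_of_pos (by positivity) _
    have hε₁p : ε₁ ^ p = η / 3 := by
      rw [hε₁def, ← Real.rpow_mul (by positivity), one_div,
        inv_mul_cancel₀ (by linarith : p ≠ 0), Real.rpow_one]
    have hev := (H ε₁ hε₁).eventually_lt_const (ENNReal.ofReal_pos.2 hδ)
    filter_upwards [hev] with k hk
    rw [Real.norm_of_nonneg (SNorm_nonneg p _)]
    have hmain : ∀ t, SIntegral p (fun s => uk k s - u s) t ≤ (ε/2) ^ p := by
      intro t
      set A := {s ∈ Ioo t (t+1) | ε₁ ≤ ‖uk k s - u s‖} with hA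
      have hvolA : volume A < ENNReal.ofReal δ :=
        lt_of_le_of_lt (le_iSup (fun t' => volume
          {s ∈ Ioo t' (t' + 1) | ε₁ ≤ ‖uk k s - u s‖}) t) hk
      set E := toMeasurable volume A ∩ Ioo t (t+1) with hEdef
      have hEm : MeasurableSet E := (measurableSet_toMeasurable _ _).inter measurableSet_Ioo
      have hEsub : E ⊆ Ioo t (t+1) := inter_subset_right
      have hAE : A ⊆ E := fun s hs => ⟨subset_toMeasurable _ _ hs, hs.1⟩
      have hvolE : volume E ≤ ENNReal.ofReal δ := by
        calc volume E ≤ volume (toMeasurable volume A) := measure_mono inter_subset_left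
        _ = volume A := measure_toMeasurable A
        _ ≤ _ := hvolA.le
      have hint : IntegrableOn (fun s => ‖uk k s - u s‖ ^ p) (Ioo t (t+1)) volume :=
        integrableOn_diff_rpow hp (huk k).1 hu.1 t
      have hsplit : (∫ s in Ioo t (t+1) ∩ E, ‖uk k s - u s‖ ^ p)
          + (∫ s in Ioo t (t+1) \ E, ‖uk k s - u s‖ ^ p)
          = ∫ s in Ioo t (t+1), ‖uk k s - u s‖ ^ p :=
        integral_inter_add_diff hEm hint
      have hIE : Ioo t (t+1) ∩ E = E := inter_eq_self_of_subset_right hEsub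
      have hb1 : (∫ s in E, ‖uk k s - u s‖ ^ p) ≤ 2 * η / 3 := by
        have hiuk : IntegrableOn (fun s => ‖uk k s‖ ^ p) E volume :=
          (integrableOn_norm_rpow (huk k).1 t).mono_set hEsub
        have hiu : IntegrableOn (fun s => ‖u s‖ ^ p) E volume :=
          (integrableOn_norm_rpow hu.1 t).mono_set hEsub
        have h1 : (∫ s in E, ‖uk k s - u s‖ ^ p)
            ≤ ∫ s in E, 2 ^ p * (‖uk k s‖ ^ p + ‖u s‖ ^ p) := by
          apply setIntegral_mono_on (hint.mono_set hEsub) ((hiuk.add hiu).const_mul (2^p)) hEm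
          exact fun s _ => norm_sub_rpow_le hp (uk k s) (u s)
        have h2 : (∫ s in E, 2 ^ p * (‖uk k s‖ ^ p + ‖u s‖ ^ p))
            = 2 ^ p * ((∫ s in E, ‖uk k s‖ ^ p) + ∫ s in E, ‖u s‖ ^ p) := by
          rw [MeasureTheory.integral_const_mul, integral_add hiuk hiu]
        have h3 : (∫ s in E, ‖uk k s‖ ^ p) ≤ η/(3*2^p) := hδuk k t E hEm hEsub hvolE
        have h4 : (∫ s in E, ‖u s‖ ^ p) ≤ η/(3*2^p) := hUIu t E hEm hEsub hvolE
        have h5 : 2 ^ p * ((∫ s in E, ‖uk k s‖ ^ p) + ∫ s in E, ‖u s‖ ^ p)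
            ≤ 2 ^ p * (η/(3*2^p) + η/(3*2^p)) :=
          mul_le_mul_of_nonneg_left (add_le_add h3 h4) h2p.le
        have h6 : 2 ^ p * (η/(3*2^p) + η/(3*2^p)) = 2 * η / 3 := by
          field_simp
          ring
        linarith [h1.trans (h2.trans_le h5)]
      have hb2 : (∫ s in Ioo t (t+1) \ E, ‖uk k s - u s‖ ^ p) ≤ η / 3 := by
        have hfin : volume (Ioo t (t+1) \ E) < ⊤ :=
          lt_of_le_of_lt (measure_mono diff_subset)
            (by rw [Real.volume_Ioo]; exact ENNReal.ofReal_lt_top)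
        have h1 : (∫ s in Ioo t (t+1) \ E, ‖uk k s - u s‖ ^ p)
            ≤ ∫ _ in Ioo t (t+1) \ E, ε₁ ^ p := by
          apply setIntegral_mono_on (hint.mono_set diff_subset)
            (integrableOn_const hfin.ne) (measurableSet_Ioo.diff hEm)
          intro s hs
          have hsA : s ∉ A := fun h => hs.2 (hAE h)
          have hlt : ¬ ε₁ ≤ ‖uk k s - u s‖ := fun h => hsA ⟨hs.1, h⟩
          exact Real.rpow_le_rpow (norm_nonneg _) (le_of_not_ge hlt) (by linarith)
        have h2 : (∫ _ in Ioo t (t+1) \ E, ε₁ ^ p)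
            = (volume (Ioo t (t+1) \ E)).toReal * ε₁ ^ p := by
          rw [setIntegral_const, smul_eq_mul]; rfl
        have h3 : (volume (Ioo t (t+1) \ E)).toReal ≤ 1 := by
          apply ENNReal.toReal_le_of_le_ofReal zero_le_one
          refine (measure_mono diff_subset).trans ?_
          rw [Real.volume_Ioo]
          apply ENNReal.ofReal_le_ofReal
          linarith
        have h4 : (volume (Ioo t (t+1) \ E)).toReal * ε₁ ^ p ≤ 1 * ε₁ ^ p :=
          mul_le_mul_of_nonneg_right h3 (Real.rpow_nonneg hε₁.le p)
        calc (∫ s in Ioo t (t+1) \ E, ‖uk k s - u s‖ ^ p)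
            ≤ (volume (Ioo t (t+1) \ E)).toReal * ε₁ ^ p := h1.trans_eq h2
        _ ≤ 1 * ε₁ ^ p := h4
        _ = η / 3 := by rw [one_mul, hε₁p]
      calc SIntegral p (fun s => uk k s - u s) t
          = ∫ s in Ioo t (t+1), ‖uk k s - u s‖ ^ p := SIntegral_eq p _ t
      _ = (∫ s in E, ‖uk k s - u s‖ ^ p)
            + ∫ s in Ioo t (t+1) \ E, ‖uk k s - u s‖ ^ p := by rw [← hsplit, hIE]
      _ ≤ 2 * η / 3 + η / 3 := add_le_add hb1 hb2
      _ = η := by ring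
    have := SNorm_le_of_SIntegral_le hp (by linarith : (0:ℝ) ≤ ε/2) hmain
    linarith
end

section
/- Let $u:\mathbb{R}\to X$ and $v \in AP(\mathbb{R},Y)$ satisfy: for every $\varepsilon>0$ there exists $M>0$ such that for all $t_1,t_2\in\mathbb{R}$, $\|u(t_1)-u(t_2)\|_X \le \varepsilon/2 + M\|v(t_1)-v(t_2)\|_Y$. Then $u \in AP(\mathbb{R},X)$. -/
open MeasureTheory Set Filter Topology
open scoped ENNReal

variable {X : Type*} [NormedAddCommGroup X]

/-- If `v ∈ AP(ℝ,Y)` and `u : ℝ → X` satisfies: for every `ε > 0` there is `M > 0` with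
`‖u(t₁)-u(t₂)‖ ≤ ε/2 + M‖v(t₁)-v(t₂)‖` for all `t₁,t₂`, then `u ∈ AP(ℝ,X)`. -/
theorem stmt_14 {Y : Type*} [NormedAddCommGroup Y]
    (u : ℝ → X) (v : ℝ → Y) (hv : IsAlmostPeriodic v)
    (h : ∀ ε > (0:ℝ), ∃ M > (0:ℝ), ∀ t₁ t₂ : ℝ,
      ‖u t₁ - u t₂‖ ≤ ε / 2 + M * ‖v t₁ - v t₂‖) :
    IsAlmostPeriodic u := by
  constructor
  · -- continuity
    rw [Metric.continuous_iff]
    intro b ε hε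
    obtain ⟨M, hM, hMe⟩ := h ε hε
    have hvb := hv.1.continuousAt (x := b)
    rw [Metric.continuousAt_iff] at hvb
    obtain ⟨δ, hδ, hvδ⟩ := hvb (ε / (4 * M)) (by positivity)
    refine ⟨δ, hδ, fun a ha => ?_⟩
    have h1 : ‖v a - v b‖ < ε / (4 * M) := by
      have := hvδ ha
      rwa [dist_eq_norm] at this
    have h2 : ‖u a - u b‖ ≤ ε / 2 + M * ‖v a - v b‖ := hMe a b
    have h3 : M * ‖v a - v b‖ ≤ M * (ε / (4 * M)) :=
      mul_le_mul_of_nonneg_left h1.le hM.le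
    have h4 : M * (ε / (4 * M)) = ε / 4 := by field_simp
    rw [dist_eq_norm]
    calc ‖u a - u b‖ ≤ ε / 2 + ε / 4 := by rw [← h4]; linarith
    _ < ε := by linarith
  · intro ε hε
    obtain ⟨M, hM, hMe⟩ := h ε hε
    obtain ⟨ℓ, hℓ, hτ⟩ := hv.2 (ε / (2 * M)) (by positivity)
    refine ⟨ℓ, hℓ, fun α => ?_⟩
    obtain ⟨τ, hτmem, hτε⟩ := hτ α
    refine ⟨τ, hτmem, fun t => ?_⟩
    have h2 := hMe (t + τ) t
    have h3 : M * ‖v (t + τ) - v t‖ ≤ M * (ε / (2 * M)) :=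
      mul_le_mul_of_nonneg_left (hτε t) hM.le
    have h4 : M * (ε / (2 * M)) = ε / 2 := by field_simp
    linarith
end

section
/- Let $u:\mathbb{R}\to X$ and $v \in AA(\mathbb{R},Y)$ satisfy: for every $\varepsilon>0$ there exists $M>0$ such that for all $t_1,t_2\in\mathbb{R}$, $\|u(t_1)-u(t_2)\|_X \le \varepsilon/2 + M\|v(t_1)-v(t_2)\|_Y$. Then $u \in AA(\mathbb{R},X)$. -/
open MeasureTheory Set Filter Topology
open scoped ENNReal

variable {X : Type*} [NormedAddCommGroup X]

/-- If `v ∈ AA(ℝ,Y)` and `u : ℝ → X` satisfies: for every `ε > 0` there is `M > 0` with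
`‖u(t₁)-u(t₂)‖ ≤ ε/2 + M‖v(t₁)-v(t₂)‖` for all `t₁,t₂`, then `u ∈ AA(ℝ,X)`. -/
theorem stmt_15 {Y : Type*} [NormedAddCommGroup Y] [CompleteSpace X]
    (u : ℝ → X) (v : ℝ → Y) (hv : IsAlmostAutomorphic v)
    (h : ∀ ε > (0:ℝ), ∃ M > (0:ℝ), ∀ t₁ t₂ : ℝ,
      ‖u t₁ - u t₂‖ ≤ ε / 2 + M * ‖v t₁ - v t₂‖) :
    IsAlmostAutomorphic u := by
  obtain ⟨hvc, hvaa⟩ := hv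
  constructor
  · -- continuity
    rw [Metric.continuous_iff]
    intro b ε hε
    obtain ⟨M, hM, hMb⟩ := h (ε / 2) (by linarith)
    have hvb := (Metric.continuous_iff.1 hvc) b (ε / (2 * M))
      (by positivity)
    obtain ⟨δ, hδ, hδb⟩ := hvb
    refine ⟨δ, hδ, fun a ha => ?_⟩
    have h1 := hMb a b
    have h2 := hδb a ha
    rw [dist_eq_norm] at h2 ⊢
    have : M * ‖v a - v b‖ < M * (ε / (2 * M)) :=
      mul_lt_mul_of_pos_left h2 hM
    have hMne : M ≠ 0 := ne_of_gt hM
    have : M * (ε / (2 * M)) = ε / 2 := by field_simp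
    calc ‖u a - u b‖ ≤ ε / 2 / 2 + M * ‖v a - v b‖ := h1
      _ < ε / 2 / 2 + ε / 2 := by
          rw [← this]; linarith [mul_lt_mul_of_pos_left h2 hM]
      _ < ε := by linarith
  · intro s
    obtain ⟨φ, hφ, w, hw1, hw2⟩ := hvaa s
    -- u (t + s (φ k)) is Cauchy for each t
    have hC : ∀ t : ℝ, ∃ L : X,
        Tendsto (fun k => u (t + s (φ k))) atTop (𝓝 L) := by
      intro t
      have hcauchy : CauchySeq (fun k => u (t + s (φ k))) := by
        rw [Metric.cauchySeq_iff]
        intro ε hε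
        obtain ⟨M, hM, hMb⟩ := h (ε / 2) (by linarith)
        have hvC : CauchySeq (fun k => v (t + s (φ k))) :=
          (hw1 t).cauchySeq
        rw [Metric.cauchySeq_iff] at hvC
        obtain ⟨N, hN⟩ := hvC (ε / (2 * M)) (by positivity)
        refine ⟨N, fun m hm n hn => ?_⟩
        have h1 := hMb (t + s (φ m)) (t + s (φ n))
        have h2 := hN m hm n hn
        rw [dist_eq_norm] at h2 ⊢
        have h3 : M * ‖v (t + s (φ m)) - v (t + s (φ n))‖
            < M * (ε / (2 * M)) := mul_lt_mul_of_pos_left h2 hM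
        have h4 : M * (ε / (2 * M)) = ε / 2 := by field_simp
        calc ‖u (t + s (φ m)) - u (t + s (φ n))‖
            ≤ ε / 2 / 2 + M * ‖v (t + s (φ m)) - v (t + s (φ n))‖ := h1
          _ < ε / 2 / 2 + ε / 2 := by rw [← h4]; linarith
          _ < ε := by linarith
      exact cauchySeq_tendsto_of_complete hcauchy
    refine ⟨φ, hφ, fun t => (hC t).choose, fun t => (hC t).choose_spec, ?_⟩
    intro t
    rw [Metric.tendsto_atTop]
    intro ε hε
    obtain ⟨M, hM, hMb⟩ := h (ε / 2) (by linarith)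
    -- key limit inequality
    have key : ∀ t' : ℝ, ‖(hC t').choose - u t‖ ≤ ε / 2 / 2 + M * ‖w t' - v t‖ := by
      intro t'
      refine le_of_tendsto_of_tendsto'
        (f := fun j => ‖u (t' + s (φ j)) - u t‖)
        (g := fun j => ε / 2 / 2 + M * ‖v (t' + s (φ j)) - v t‖)
        (((hC t').choose_spec.sub tendsto_const_nhds).norm)
        (tendsto_const_nhds.add
          ((((hw1 t').sub tendsto_const_nhds).norm).const_mul M))
        (fun j => hMb (t' + s (φ j)) t)
    have hlim : Tendsto (fun k => w (t - s (φ k))) atTop (𝓝 (v t)) := hw2 t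
    rw [Metric.tendsto_atTop] at hlim
    obtain ⟨N, hN⟩ := hlim (ε / (2 * M)) (by positivity)
    refine ⟨N, fun k hk => ?_⟩
    have h1 := key (t - s (φ k))
    have h2 := hN k hk
    rw [dist_eq_norm] at h2 ⊢
    have h3 : M * ‖w (t - s (φ k)) - v t‖ < M * (ε / (2 * M)) :=
      mul_lt_mul_of_pos_left h2 hM
    have h4 : M * (ε / (2 * M)) = ε / 2 := by field_simp
    calc ‖(hC (t - s (φ k))).choose - u t‖
        ≤ ε / 2 / 2 + M * ‖w (t - s (φ k)) - v t‖ := h1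
      _ < ε / 2 / 2 + ε / 2 := by rw [← h4]; linarith
      _ < ε := by linarith
end

section
/- Let $f:\mathbb{R}\times X\to Y$ satisfy: (a) there are $a>0$ and $b\in S^q_{aa}(\mathbb{R})$ with $\|f(t,x)\|\le a\|x\|^{p/q}+b(t)$ for all $x$ and a.e. $t$; (b) $f(t,\cdot)$ continuous for a.e. $t$; (c) $f(\cdot,x)\in BS^q(\mathbb{R},Y)$ for each $x$; (d) $f(\cdot,x)\in L^q_{loc}(\mathbb{R},Y)$ for all $x$. Then for every compact set $K\subset X$, the map $\tilde f_K:\mathbb{R}\to C(K,Y)$, $\tilde f_K(t)=f(t,\cdot)|_K$, belongs to $L^q_{loc}(\mathbb{R}, C(K,Y))$ (in particular $\tilde f_K$ is strongly measurable on bounded intervals). -/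
open MeasureTheory Set Filter Topology
open scoped ENNReal

variable {X : Type*} [NormedAddCommGroup X]

/-- Measurability from measurability of distances to a countable set whose closure contains
the range. -/
private lemma measurable_of_dist_countable' {α E : Type*} [MeasurableSpace α] [PseudoMetricSpace E]
    [MeasurableSpace E] [BorelSpace E] {g : α → E} (w : ℕ → E)
    (hdense : ∀ t, g t ∈ closure (Set.range w))
    (hdist : ∀ n, Measurable fun t => dist (g t) (w n)) : Measurable g := by
  apply measurable_of_isOpen
  intro U hU
  have key : g ⁻¹' U =
      ⋃ (n : ℕ) (r : ℚ) (_ : 0 < (r : ℝ) ∧ Metric.ball (w n) (2 * r) ⊆ U),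
        {t | dist (g t) (w n) < r} := by
    ext t
    simp only [Set.mem_preimage, Set.mem_iUnion, Set.mem_setOf_eq]
    constructor
    · intro htU
      obtain ⟨ε, hε, hball⟩ := Metric.isOpen_iff.1 hU _ htU
      obtain ⟨y, ⟨n, rfl⟩, hyd⟩ := Metric.mem_closure_iff.1 (hdense t) (ε / 3) (by linarith)
      obtain ⟨r, hr1, hr2⟩ := exists_rat_btwn hyd
      refine ⟨n, r, ⟨lt_of_le_of_lt dist_nonneg hr1, fun y hy => hball ?_⟩, hr1⟩
      rw [Metric.mem_ball] at hy ⊢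
      calc dist y (g t) ≤ dist y (w n) + dist (w n) (g t) := dist_triangle _ _ _
        _ < 2 * r + r := by rw [dist_comm (w n)]; exact add_lt_add hy hr1
        _ ≤ ε := by linarith
    · rintro ⟨n, r, ⟨hr, hsub⟩, hlt⟩
      exact hsub (by rw [Metric.mem_ball]; linarith)
  rw [key]
  refine MeasurableSet.iUnion fun n => MeasurableSet.iUnion fun r =>
    MeasurableSet.iUnion fun _ => ?_
  exact (hdist n) measurableSet_Iio

private lemma aux_rpow_add' {u v s : ℝ} (hu : 0 ≤ u) (hv : 0 ≤ v) (hs : 0 ≤ s) :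
    (u + v) ^ s ≤ 2 ^ s * (u ^ s + v ^ s) := by
  have h1 : u + v ≤ 2 * max u v := by
    rcases le_total u v with h | h
    · rw [max_eq_right h]; linarith
    · rw [max_eq_left h]; linarith
  have h2 : (0:ℝ) ≤ max u v := le_trans hu (le_max_left _ _)
  calc (u + v) ^ s ≤ (2 * max u v) ^ s :=
        Real.rpow_le_rpow (by linarith) h1 hs
    _ = 2 ^ s * (max u v) ^ s := Real.mul_rpow (by norm_num) h2
    _ ≤ 2 ^ s * (u ^ s + v ^ s) := by
        have : (max u v) ^ s ≤ u ^ s + v ^ s := by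
          rcases le_total u v with h | h
          · rw [max_eq_right h]
            exact le_add_of_nonneg_left (Real.rpow_nonneg hu _)
          · rw [max_eq_left h]
            exact le_add_of_nonneg_right (Real.rpow_nonneg hv _)
        have h2s : (0:ℝ) ≤ 2 ^ s := Real.rpow_nonneg (by norm_num) _
        nlinarith

/-- Under the growth condition (H1), the Carathéodory condition (H2), and
`f(·,x) ∈ BS^q(ℝ,Y) ⊂ L^q_loc(ℝ,Y)` for each `x`, for every compact `K ⊂ X` the map
`t ↦ f(t,·)|_K` belongs to `L^q_loc(ℝ, C(K,Y))`: it agrees a.e. with a strongly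
measurable, locally `q`-integrable function with values in `C(K,Y)`. -/
theorem stmt_16 {Y : Type*} [NormedAddCommGroup Y] (p q : ℝ) (hp : 1 ≤ p) (hq : 1 ≤ q)
    (f : ℝ → X → Y)
    (H1 : ∃ a > (0:ℝ), ∃ b : ℝ → ℝ, StepanovAA q b ∧
      ∀ᵐ t : ℝ, ∀ x : X, ‖f t x‖ ≤ a * ‖x‖ ^ (p / q) + b t)
    (H2 : ∀ᵐ t : ℝ, Continuous (f t))
    (hx : ∀ x : X, MemBSp q (fun t => f t x))
    (K : Set X) [CompactSpace K] (hK : IsCompact K) :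
    ∃ g : ℝ → ContinuousMap K Y,
      (∀ᵐ t : ℝ, ∀ x : K, g t x = f t (x : X)) ∧
      AEStronglyMeasurable g volume ∧
      LocallyIntegrable (fun t => ‖g t‖ ^ q) volume := by
  classical
  borelize Y
  obtain ⟨a, ha, b, hb, hbound⟩ := H1
  have hq0 : (0:ℝ) < q := by linarith
  have hxm : ∀ x : X, AEStronglyMeasurable (fun t => f t x) volume := fun x => (hx x).1.1
  set F : X → ℝ → Y := fun x => (hxm x).mk _ with hF
  have hF_meas : ∀ x, StronglyMeasurable (F x) := fun x => (hxm x).stronglyMeasurable_mk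
  have hF_eq : ∀ x, (fun t => f t x) =ᵐ[volume] F x := fun x => (hxm x).ae_eq_mk
  rcases isEmpty_or_nonempty K with hKe | hKne
  · refine ⟨fun _ => 0, ?_, aestronglyMeasurable_const, ?_⟩
    · filter_upwards with t x
      exact (IsEmpty.false x).elim
    · have h0 : (fun t : ℝ => ‖(0 : ContinuousMap K Y)‖ ^ q) = fun _ => (0:ℝ) := by
        funext t
        rw [norm_zero, Real.zero_rpow (by linarith)]
      rw [h0]
      exact locallyIntegrable_const 0
  haveI : TopologicalSpace.SeparableSpace K := hK.isSeparable.separableSpace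
  obtain ⟨e, he⟩ := TopologicalSpace.exists_dense_seq K
  set S : Set Y := ⋃ n, Set.range (F (e n)) with hSdef
  have hS : TopologicalSpace.IsSeparable S :=
    TopologicalSpace.IsSeparable.iUnion fun n => (hF_meas _).isSeparable_range
  set Z : Set Y := closure S with hZdef
  have hZsep : TopologicalSpace.IsSeparable Z := hS.closure
  have hcond : ∀ᵐ t : ℝ, Continuous (f t) ∧ (∀ x : X, ‖f t x‖ ≤ a * ‖x‖ ^ (p/q) + b t)
      ∧ ∀ n : ℕ, f t (e n) = F (e n) t := by
    refine H2.and (hbound.and ?_)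
    rw [ae_all_iff]
    exact fun n => hF_eq (e n)
  obtain ⟨N, hNsub, hNm, hNnull⟩ := exists_measurable_superset_of_null (ae_iff.1 hcond)
  set A : Set ℝ := Nᶜ with hAdef
  have hAm : MeasurableSet A := hNm.compl
  have hAgood : ∀ t ∈ A, Continuous (f t) ∧ (∀ x : X, ‖f t x‖ ≤ a * ‖x‖ ^ (p/q) + b t)
      ∧ ∀ n : ℕ, f t (e n) = F (e n) t := by
    intro t ht
    by_contra h
    exact ht (hNsub h)
  have hAae : ∀ᵐ t : ℝ, t ∈ A := by
    rw [ae_iff]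
    simpa [hAdef] using hNnull
  set g : ℝ → ContinuousMap K Y := fun t =>
    if h : t ∈ A then ContinuousMap.mk (fun x : K => f t x)
      ((hAgood t h).1.comp continuous_subtype_val) else 0 with hgdef
  have hg_eq : ∀ t ∈ A, ∀ x : K, g t x = f t (x : X) := by
    intro t ht x
    simp only [hgdef, dif_pos ht, ContinuousMap.coe_mk]
  have hg_zero : ∀ t ∉ A, g t = 0 := fun t ht => by simp only [hgdef, dif_neg ht]
  have hZmem : ∀ t ∈ A, ∀ x : K, f t (x : X) ∈ Z := by
    intro t ht x
    have hx1 : x ∈ closure (Set.range e) := by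
      rw [he.closure_range]; trivial
    have hxcl : (x : X) ∈ closure (Set.range fun n => (e n : X)) := by
      have h2 := (image_closure_subset_closure_image
        (continuous_subtype_val (p := (· ∈ K)))) ⟨x, hx1, rfl⟩
      rwa [← Set.range_comp] at h2
    have h2 : f t (x : X) ∈ closure (f t '' Set.range fun n => (e n : X)) :=
      (image_closure_subset_closure_image (hAgood t ht).1) ⟨_, hxcl, rfl⟩
    have h3 : f t '' (Set.range fun n => (e n : X)) ⊆ S := by
      rintro _ ⟨_, ⟨n, rfl⟩, rfl⟩
      rw [(hAgood t ht).2.2 n]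
      exact Set.mem_iUnion.2 ⟨n, Set.mem_range_self t⟩
    exact closure_minimal (h3.trans subset_closure) isClosed_closure h2
  haveI : TopologicalSpace.SeparableSpace (Z : Set Y) := hZsep.separableSpace
  haveI : SecondCountableTopology (Z : Set Y) := UniformSpace.secondCountable_of_separable _
  haveI : SecondCountableTopology K := UniformSpace.secondCountable_of_separable _
  set ι : ContinuousMap (Z : Set Y) Y := ⟨Subtype.val, continuous_subtype_val⟩ with hιdef
  set T : Set (ContinuousMap K Y) :=
    Set.range fun h : ContinuousMap K (Z : Set Y) => ι.comp h with hTdef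
  have hTsep : TopologicalSpace.IsSeparable T :=
    TopologicalSpace.isSeparable_range (ContinuousMap.continuous_postcomp ι)
  have hT0 : TopologicalSpace.IsSeparable (T ∪ {0}) :=
    hTsep.union ((Set.countable_singleton _).isSeparable)
  have hrange : ∀ t, g t ∈ T ∪ {0} := by
    intro t
    by_cases ht : t ∈ A
    · left
      refine ⟨ContinuousMap.mk (fun x : K => (⟨f t x, hZmem t ht x⟩ : (Z : Set Y)))
        (Continuous.subtype_mk ((hAgood t ht).1.comp continuous_subtype_val) _), ?_⟩
      ext x
      simp only [hιdef, ContinuousMap.comp_apply, ContinuousMap.coe_mk]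
      exact (hg_eq t ht x).symm
    · right
      simp [hg_zero t ht]
  obtain ⟨c, hc_count, hc_sub⟩ := id hT0
  have hc_ne : c.Nonempty := by
    rcases Set.eq_empty_or_nonempty c with rfl | h
    · simpa using hc_sub (Set.mem_union_right _ rfl)
    · exact h
  obtain ⟨w, rfl⟩ := Set.Countable.exists_eq_range hc_count hc_ne
  borelize (ContinuousMap K Y)
  have hdist_eq : ∀ (t : ℝ) (h : ContinuousMap K Y),
      dist (g t) h = ⨆ m, dist (g t (e m)) (h (e m)) := by
    intro t h
    have hbdd : BddAbove (Set.range fun m => dist (g t (e m)) (h (e m))) := by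
      refine ⟨dist (g t) h, ?_⟩
      rintro _ ⟨m, rfl⟩
      exact ContinuousMap.dist_apply_le_dist _
    refine le_antisymm ?_ (ciSup_le fun m => ContinuousMap.dist_apply_le_dist _)
    have h0 : (0:ℝ) ≤ ⨆ m, dist (g t (e m)) (h (e m)) :=
      le_ciSup_of_le hbdd 0 dist_nonneg
    rw [ContinuousMap.dist_le h0]
    intro x
    have hcl : IsClosed {y : K | dist (g t y) (h y) ≤ ⨆ m, dist (g t (e m)) (h (e m))} :=
      isClosed_le (Continuous.dist (map_continuous (g t)) (map_continuous h)) continuous_const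
    have hsub2 : Set.range e ⊆
        {y : K | dist (g t y) (h y) ≤ ⨆ m, dist (g t (e m)) (h (e m))} := by
      rintro _ ⟨m, rfl⟩
      exact le_ciSup hbdd m
    have hall := hcl.closure_subset_iff.2 hsub2
    rw [he.closure_range] at hall
    exact hall trivial
  have hg_meas : Measurable g := by
    apply measurable_of_dist_countable' w
    · intro t
      exact hc_sub (hrange t)
    · intro n
      have heq : (fun t => dist (g t) (w n)) =
          fun t => ⨆ m, dist (g t (e m)) ((w n) (e m)) := funext fun t => hdist_eq t (w n)
      rw [heq]
      refine Measurable.iSup fun m =>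
        (Continuous.measurable (continuous_id.dist continuous_const)).comp ?_
      have heq2 : (fun t => g t (e m)) = A.piecewise (F (e m)) (fun _ => 0) := by
        funext t
        by_cases ht : t ∈ A
        · rw [Set.piecewise_eq_of_mem _ _ _ ht, hg_eq t ht, (hAgood t ht).2.2 m]
        · rw [Set.piecewise_eq_of_notMem _ _ _ ht, hg_zero t ht]
          rfl
      rw [heq2]
      exact Measurable.piecewise hAm (hF_meas _).measurable measurable_const
  have hg_sm : StronglyMeasurable g :=
    stronglyMeasurable_iff_measurable_separable.2
      ⟨hg_meas, hT0.mono (Set.range_subset_iff.2 hrange)⟩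
  obtain ⟨R, hR⟩ := isBounded_iff_forall_norm_le.1 hK.isBounded
  set R' : ℝ := max R 0 with hR'def
  set C : ℝ := a * R' ^ (p / q) with hCdef
  have hC0 : 0 ≤ C := mul_nonneg ha.le (Real.rpow_nonneg (le_max_right _ _) _)
  have hpq : 0 ≤ p / q := div_nonneg (by linarith) (by linarith)
  have hgb : ∀ t, ‖g t‖ ≤ C + |b t| := by
    intro t
    by_cases ht : t ∈ A
    · have hnn : 0 ≤ C + |b t| := add_nonneg hC0 (abs_nonneg _)
      rw [ContinuousMap.norm_le _ hnn]
      intro x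
      rw [hg_eq t ht x]
      calc ‖f t (x : X)‖ ≤ a * ‖(x : X)‖ ^ (p/q) + b t := (hAgood t ht).2.1 x
        _ ≤ C + |b t| := by
            have h1 : ‖(x : X)‖ ^ (p/q) ≤ R' ^ (p/q) :=
              Real.rpow_le_rpow (norm_nonneg _) ((hR x x.2).trans (le_max_left _ _)) hpq
            exact add_le_add (mul_le_mul_of_nonneg_left h1 ha.le) (le_abs_self _)
    · rw [hg_zero t ht, norm_zero]
      exact add_nonneg hC0 (abs_nonneg _)
  have hnm : AEStronglyMeasurable (fun t => ‖g t‖ ^ q) volume := by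
    apply Measurable.aestronglyMeasurable
    exact (Real.continuous_rpow_const hq0.le).measurable.comp hg_meas.norm
  have hbloc : LocallyIntegrable (fun t => |b t| ^ q) volume := by
    have h := hb.1.2
    simpa [Real.norm_eq_abs] using h
  have hBloc : LocallyIntegrable (fun t => 2 ^ q * (C ^ q + |b t| ^ q)) volume := by
    have heqB : (fun t => 2 ^ q * (C ^ q + |b t| ^ q)) =
        ((2:ℝ) ^ q) • ((fun _ : ℝ => C ^ q) + fun t => |b t| ^ q) := by
      funext t
      simp [smul_eq_mul]
    rw [heqB]
    exact ((locallyIntegrable_const (μ := volume) (C ^ q)).add hbloc).smul ((2:ℝ) ^ q)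
  refine ⟨g, ?_, hg_sm.aestronglyMeasurable, ?_⟩
  · filter_upwards [hAae] with t ht x
    exact hg_eq t ht x
  · apply hBloc.mono hnm
    filter_upwards with t
    have h1 : ‖g t‖ ^ q ≤ (C + |b t|) ^ q :=
      Real.rpow_le_rpow (norm_nonneg _) (hgb t) hq0.le
    have h2 : (C + |b t|) ^ q ≤ 2 ^ q * (C ^ q + |b t| ^ q) :=
      aux_rpow_add' hC0 (abs_nonneg _) hq0.le
    have hL : ‖‖g t‖ ^ q‖ = ‖g t‖ ^ q :=
      Real.norm_of_nonneg (Real.rpow_nonneg (norm_nonneg _) _)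
    have hRn : ‖2 ^ q * (C ^ q + |b t| ^ q)‖ = 2 ^ q * (C ^ q + |b t| ^ q) := by
      apply Real.norm_of_nonneg
      have := Real.rpow_nonneg (abs_nonneg (b t)) q
      have := Real.rpow_nonneg hC0 q
      have : (0:ℝ) ≤ 2 ^ q := Real.rpow_nonneg (by norm_num) _
      positivity
    rw [hL, hRn]
    exact h1.trans h2
end

section
/- Suppose $f:\mathbb{R}\times X\to Y$ satisfies: there exist $p,q,r\ge 1$ with $1/q = 1/p + 1/r$ and $L\in BS^r(\mathbb{R})$ with $\|f(t,x_1)-f(t,x_2)\|\le L(t)\|x_1-x_2\|$ for all $x_1,x_2\in X$ and a.e. $t$, and $f(\cdot,0)\in BS^q(\mathbb{R},Y)$ while $f(\cdot,u(\cdot))$ is strongly measurable on bounded intervals for each $u\in BS^p(\mathbb{R},X)$. Then the Nemytskii operator $\mathcal{N}_f(u)(t) = f(t,u(t))$ maps $BS^p(\mathbb{R},X)$ into $BS^q(\mathbb{R},Y)$ and is Lipschitzian with constant $\|L\|_{S^r}$: $\|\mathcal{N}_f(u)-\mathcal{N}_f(v)\|_{S^q} \le \|L\|_{S^r}\|u-v\|_{S^p}$.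 -/
open MeasureTheory Set Filter Topology
open scoped ENNReal

variable {X : Type*} [NormedAddCommGroup X]

section AuxLemmas

lemma aux_rpow_add_le {a b e : ℝ} (ha : 0 ≤ a) (hb : 0 ≤ b) (he : 0 ≤ e) :
    (a + b) ^ e ≤ 2 ^ e * (a ^ e + b ^ e) := by
  have h1 : a + b ≤ 2 * max a b := by
    rcases le_total a b with h | h
    · rw [max_eq_right h]; linarith
    · rw [max_eq_left h]; linarith
  have h2 : (max a b) ^ e ≤ a ^ e + b ^ e := by
    rcases max_cases a b with ⟨h, _⟩ | ⟨h, _⟩ <;> rw [h]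
    · linarith [Real.rpow_nonneg hb e]
    · linarith [Real.rpow_nonneg ha e]
  calc (a + b) ^ e ≤ (2 * max a b) ^ e :=
        Real.rpow_le_rpow (by linarith) h1 he
    _ = 2 ^ e * (max a b) ^ e := Real.mul_rpow (by norm_num) (le_max_of_le_left ha)
    _ ≤ 2 ^ e * (a ^ e + b ^ e) :=
        mul_le_mul_of_nonneg_left h2 (Real.rpow_nonneg (by norm_num) e)

lemma aux_setIntegral_shift (g : ℝ → ℝ) (t : ℝ) :
    ∫ θ in Ioo (0:ℝ) 1, g (t + θ) = ∫ s in Ioo t (t+1), g s := by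
  have hpre : ((t + ·) : ℝ → ℝ) ⁻¹' (Ioo t (t+1)) = Ioo 0 1 := by
    ext θ
    simp only [mem_preimage, mem_Ioo]
    constructor <;> rintro ⟨h1, h2⟩ <;> constructor <;> linarith
  have h := (measurePreserving_add_left volume t).setIntegral_preimage_emb
      (MeasurableEquiv.addLeft t).measurableEmbedding g (Ioo t (t+1))
  rw [hpre] at h
  simpa using h

lemma SIntegral_eq (p : ℝ) (u : ℝ → X) (t : ℝ) :
    SIntegral p u t = ∫ s in Ioo t (t+1), ‖u s‖ ^ p :=
  aux_setIntegral_shift (fun s => ‖u s‖ ^ p) t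

lemma SIntegral_nonneg (p : ℝ) (u : ℝ → X) (t : ℝ) :
    0 ≤ SIntegral p u t :=
  integral_nonneg fun _ => Real.rpow_nonneg (norm_nonneg _) _

lemma SNorm_nonneg (p : ℝ) (u : ℝ → X) : 0 ≤ SNorm p u :=
  Real.iSup_nonneg fun t => Real.rpow_nonneg (SIntegral_nonneg _ _ _) _

lemma le_SNorm {ρ : ℝ} (hρ : 0 ≤ ρ) {g : ℝ → X} (hb : BddAbove (Set.range (SIntegral ρ g)))
    (t : ℝ) : (SIntegral ρ g t) ^ (1/ρ) ≤ SNorm ρ g := by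
  obtain ⟨M, hM⟩ := hb
  have hbdd : BddAbove (Set.range fun s => (SIntegral ρ g s) ^ (1/ρ)) := by
    refine ⟨M ^ (1/ρ), ?_⟩
    rintro x ⟨s, rfl⟩
    exact Real.rpow_le_rpow (SIntegral_nonneg _ _ _) (hM ⟨s, rfl⟩) (one_div_nonneg.2 hρ)
  exact le_ciSup hbdd t

lemma aux_memLp {E : Type*} [NormedAddCommGroup E] {μ : Measure ℝ} {u : ℝ → E} {ρ : ℝ}
    (hρ : 0 < ρ) (hm : AEStronglyMeasurable u μ) (hi : Integrable (fun s => ‖u s‖ ^ ρ) μ) :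
    MemLp u (ENNReal.ofReal ρ) μ := by
  have hne : ENNReal.ofReal ρ ≠ 0 := by
    simp only [ne_eq, ENNReal.ofReal_eq_zero, not_le]; exact hρ
  have h1 : MemLp (fun x => ‖u x‖ ^ (ENNReal.ofReal ρ).toReal)
      (ENNReal.ofReal ρ / ENNReal.ofReal ρ) μ := by
    rw [ENNReal.div_self hne ENNReal.ofReal_ne_top, ENNReal.toReal_ofReal hρ.le]
    exact memLp_one_iff_integrable.2 hi
  exact (memLp_norm_rpow_iff hm hne ENNReal.ofReal_ne_top).1 h1

lemma aux_memLp_rpow {E : Type*} [NormedAddCommGroup E] {μ : Measure ℝ} {u : ℝ → E} {ρ σ : ℝ}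
    (hσ : 0 < σ) (hρ : 0 < ρ) (hm : AEStronglyMeasurable u μ)
    (hi : Integrable (fun s => ‖u s‖ ^ ρ) μ) :
    MemLp (fun s => ‖u s‖ ^ σ) (ENNReal.ofReal (ρ / σ)) μ := by
  have hσne : ENNReal.ofReal σ ≠ 0 := by
    simp only [ne_eq, ENNReal.ofReal_eq_zero, not_le]; exact hσ
  have h := (memLp_norm_rpow_iff (p := ENNReal.ofReal ρ) (q := ENNReal.ofReal σ) hm
      hσne ENNReal.ofReal_ne_top).2 (aux_memLp hρ hm hi)
  rwa [ENNReal.toReal_ofReal hσ.le, ← ENNReal.ofReal_div_of_pos hσ] at h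

lemma aux_hoelder {E F : Type*} [NormedAddCommGroup E] [NormedAddCommGroup F]
    {μ : Measure ℝ} {p q r : ℝ} (hq : 0 < q) (hqp : q < p) (hqr : q < r)
    (hpqr : 1 / q = 1 / p + 1 / r) {A : ℝ → E} {B : ℝ → F}
    (hAm : AEStronglyMeasurable A μ) (hAi : Integrable (fun s => ‖A s‖ ^ r) μ)
    (hBm : AEStronglyMeasurable B μ) (hBi : Integrable (fun s => ‖B s‖ ^ p) μ) :
    Integrable (fun s => (‖A s‖ * ‖B s‖) ^ q) μ ∧
    ∫ s, (‖A s‖ * ‖B s‖) ^ q ∂μ ≤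
      (∫ s, ‖A s‖ ^ r ∂μ) ^ (q / r) * (∫ s, ‖B s‖ ^ p ∂μ) ^ (q / p) := by
  have hp : 0 < p := hq.trans hqp
  have hr : 0 < r := hq.trans hqr
  have hsum : q / r + q / p = 1 := by
    field_simp at hpqr ⊢
    nlinarith [hpqr]
  have hconj : (r / q).HolderConjugate (p / q) := by
    refine Real.holderConjugate_iff.2 ⟨(one_lt_div hq).2 hqr, ?_⟩
    rw [inv_div, inv_div]
    linarith [hsum]
  have hAq : MemLp (fun s => ‖A s‖ ^ q) (ENNReal.ofReal (r / q)) μ := aux_memLp_rpow hq hr hAm hAi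
  have hBq : MemLp (fun s => ‖B s‖ ^ q) (ENNReal.ofReal (p / q)) μ := aux_memLp_rpow hq hp hBm hBi
  have hmul : ∀ s, (‖A s‖ * ‖B s‖) ^ q = ‖A s‖ ^ q * ‖B s‖ ^ q := fun s =>
    Real.mul_rpow (norm_nonneg _) (norm_nonneg _)
  have hint : Integrable (fun s => (‖A s‖ * ‖B s‖) ^ q) μ := by
    have hexp : (1 : ℝ≥0∞) / 1 = 1 / ENNReal.ofReal (r / q) + 1 / ENNReal.ofReal (p / q) := by
      rw [one_div, one_div, one_div, ← ENNReal.ofReal_inv_of_pos (by positivity),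
        ← ENNReal.ofReal_inv_of_pos (by positivity), ← ENNReal.ofReal_add (by positivity)
        (by positivity), inv_div, inv_div, hsum]
      simp
    have h := memLp_one_iff_integrable.1 (hBq.smul hAq (hpqr := ⟨by rw [one_div, one_div, one_div] at hexp; exact hexp.symm⟩))
    simp only [smul_eq_mul, Pi.smul_apply'] at h
    refine h.congr (Eventually.of_forall fun s => ?_)
    simp [hmul s, mul_comm]
  refine ⟨hint, ?_⟩
  have h := integral_mul_le_Lp_mul_Lq_of_nonneg hconj
    (Eventually.of_forall fun s => Real.rpow_nonneg (norm_nonneg _) _)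
    (Eventually.of_forall fun s => Real.rpow_nonneg (norm_nonneg _) _) hAq hBq
  have eA : ∀ s, (‖A s‖ ^ q) ^ (r / q) = ‖A s‖ ^ r := fun s => by
    rw [← Real.rpow_mul (norm_nonneg _)]
    congr 1
    field_simp
  have eB : ∀ s, (‖B s‖ ^ q) ^ (p / q) = ‖B s‖ ^ p := fun s => by
    rw [← Real.rpow_mul (norm_nonneg _)]
    congr 1
    field_simp
  simp only [eA, eB, one_div_div] at h
  calc ∫ s, (‖A s‖ * ‖B s‖) ^ q ∂μ = ∫ s, ‖A s‖ ^ q * ‖B s‖ ^ q ∂μ :=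
        integral_congr_ae (Eventually.of_forall fun s => hmul s)
    _ ≤ _ := h

end AuxLemmas

/-- If `1/q = 1/p + 1/r`, `‖f(t,x₁)-f(t,x₂)‖ ≤ L(t)‖x₁-x₂‖` with `L ∈ BS^r(ℝ)`,
`f(·,0) ∈ BS^q(ℝ,Y)` and `f(·,u(·))` is strongly measurable for `u ∈ BS^p(ℝ,X)`, then
the Nemytskii operator `𝒩_f(u)(t) = f(t,u(t))` maps `BS^p(ℝ,X)` into `BS^q(ℝ,Y)` and is
Lipschitzian with constant `‖L‖_{S^r}`. -/
theorem stmt_17 {Y : Type*} [NormedAddCommGroup Y] (p q r : ℝ)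
    (hp : 1 ≤ p) (hq : 1 ≤ q) (hr : 1 ≤ r) (hpqr : 1 / q = 1 / p + 1 / r)
    (f : ℝ → X → Y) (L : ℝ → ℝ) (hL : MemBSp r L)
    (hlip : ∀ᵐ t : ℝ, ∀ x₁ x₂ : X, ‖f t x₁ - f t x₂‖ ≤ L t * ‖x₁ - x₂‖)
    (h0 : MemBSp q (fun t => f t 0))
    (hmeas : ∀ u : ℝ → X, MemBSp p u → AEStronglyMeasurable (fun t => f t (u t)) volume) :
    (∀ u : ℝ → X, MemBSp p u → MemBSp q (fun t => f t (u t))) ∧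
      ∀ u v : ℝ → X, MemBSp p u → MemBSp p v →
        SNorm q (fun t => f t (u t) - f t (v t)) ≤
          SNorm r L * SNorm p (fun t => u t - v t) := by
  have hq0 : 0 < q := lt_of_lt_of_le zero_lt_one hq
  have hp0 : 0 < p := lt_of_lt_of_le zero_lt_one hp
  have hr0 : 0 < r := lt_of_lt_of_le zero_lt_one hr
  have hqp : q < p := by
    have h1 : 1/p < 1/q := by
      rw [hpqr]; have := one_div_pos.2 hr0; linarith
    have := (div_lt_div_iff₀ hp0 hq0).1 h1
    linarith
  have hqr : q < r := by
    have h1 : 1/r < 1/q := by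
      rw [hpqr]; have := one_div_pos.2 hp0; linarith
    have := (div_lt_div_iff₀ hr0 hq0).1 h1
    linarith
  have hLm : AEStronglyMeasurable L volume := hL.1.1
  have hLi : ∀ t : ℝ, Integrable (fun s => ‖L s‖ ^ r) (volume.restrict (Ioo t (t+1))) := fun t =>
    (hL.1.2.integrableOn_isCompact isCompact_Icc).mono_set Ioo_subset_Icc_self
  obtain ⟨ML, hML⟩ := hL.2
  have hML' : ∀ t, SIntegral r L t ≤ ML := fun t => hML ⟨t, rfl⟩
  have hInt : ∀ (w : ℝ → X), MemBSp p w → ∀ t : ℝ,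
      Integrable (fun s => ‖w s‖ ^ p) (volume.restrict (Ioo t (t+1))) := fun w hw t =>
    (hw.1.2.integrableOn_isCompact isCompact_Icc).mono_set Ioo_subset_Icc_self
  have h0i : ∀ t : ℝ, Integrable (fun s => ‖f s 0‖ ^ q) (volume.restrict (Ioo t (t+1))) := fun t =>
    (h0.1.2.integrableOn_isCompact isCompact_Icc).mono_set Ioo_subset_Icc_self
  obtain ⟨M0, hM0⟩ := h0.2
  -- the core Hölder estimate
  have core : ∀ (G : ℝ → Y) (w : ℝ → X), AEStronglyMeasurable w volume →
      (∀ t : ℝ, Integrable (fun s => ‖w s‖ ^ p) (volume.restrict (Ioo t (t+1)))) →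
      (∀ᵐ s : ℝ, ‖G s‖ ≤ ‖L s‖ * ‖w s‖) → ∀ t : ℝ,
      SIntegral q G t ≤ (SIntegral r L t) ^ (q/r) * (SIntegral p w t) ^ (q/p) := by
    intro G w hwm hwi hGb t
    obtain ⟨hint, hhold⟩ := aux_hoelder hq0 hqp hqr hpqr hLm.restrict (hLi t)
      hwm.restrict (hwi t)
    rw [SIntegral_eq, SIntegral_eq, SIntegral_eq]
    refine le_trans ?_ hhold
    refine integral_mono_of_nonneg
      (Eventually.of_forall fun s => Real.rpow_nonneg (norm_nonneg _) _) hint ?_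
    filter_upwards [ae_restrict_of_ae hGb] with s hs
    exact Real.rpow_le_rpow (norm_nonneg _) hs hq0.le
  constructor
  · -- part 1
    intro u hu
    have hum := hu.1.1
    have hfm := hmeas u hu
    have hfb : ∀ᵐ s : ℝ, ‖f s (u s)‖ ≤ ‖f s 0‖ + ‖L s‖ * ‖u s‖ := by
      filter_upwards [hlip] with s hs
      have h2 := hs (u s) 0
      rw [sub_zero] at h2
      have h3 : L s * ‖u s‖ ≤ ‖L s‖ * ‖u s‖ := by
        rw [Real.norm_eq_abs]
        exact mul_le_mul_of_nonneg_right (le_abs_self _) (norm_nonneg _)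
      have h4 := norm_sub_norm_le (f s (u s)) (f s 0)
      linarith
    have hfqm : AEStronglyMeasurable (fun s => ‖f s (u s)‖ ^ q) volume :=
      (hfm.norm.aemeasurable.pow aemeasurable_const).aestronglyMeasurable
    have hprod : ∀ t : ℝ, Integrable (fun s => (‖L s‖ * ‖u s‖) ^ q)
        (volume.restrict (Ioo t (t+1))) := fun t =>
      (aux_hoelder hq0 hqp hqr hpqr hLm.restrict (hLi t) hum.restrict (hInt u hu t)).1
    have hdom : ∀ t : ℝ, Integrable (fun s => 2^q * (‖f s 0‖^q + (‖L s‖ * ‖u s‖)^q))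
        (volume.restrict (Ioo t (t+1))) := fun t => ((h0i t).add (hprod t)).const_mul _
    have hptw : ∀ᵐ s : ℝ, ‖f s (u s)‖ ^ q ≤ 2^q * (‖f s 0‖^q + (‖L s‖ * ‖u s‖)^q) := by
      filter_upwards [hfb] with s hs
      calc ‖f s (u s)‖ ^ q ≤ (‖f s 0‖ + ‖L s‖ * ‖u s‖) ^ q :=
            Real.rpow_le_rpow (norm_nonneg _) hs hq0.le
        _ ≤ 2^q * (‖f s 0‖^q + (‖L s‖ * ‖u s‖)^q) :=
            aux_rpow_add_le (norm_nonneg _) (mul_nonneg (norm_nonneg _) (norm_nonneg _)) hq0.le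
    have hfqi : ∀ t : ℝ, Integrable (fun s => ‖f s (u s)‖ ^ q)
        (volume.restrict (Ioo t (t+1))) := by
      intro t
      refine (hdom t).mono' hfqm.restrict ?_
      filter_upwards [ae_restrict_of_ae hptw] with s hs
      rwa [Real.norm_eq_abs, abs_of_nonneg (Real.rpow_nonneg (norm_nonneg _) _)]
    refine ⟨⟨hfm, ?_⟩, ?_⟩
    · intro x
      exact ⟨Ioo (x - 2⁻¹) (x - 2⁻¹ + 1),
        Ioo_mem_nhds (by linarith) (by linarith), hfqi _⟩
    · obtain ⟨Mu, hMu⟩ := hu.2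
      refine ⟨2^q * (M0 + (max ML 0)^(q/r) * (max Mu 0)^(q/p)), ?_⟩
      rintro x ⟨t, rfl⟩
      rw [SIntegral_eq]
      calc ∫ s in Ioo t (t+1), ‖f s (u s)‖ ^ q
          ≤ ∫ s in Ioo t (t+1), 2^q * (‖f s 0‖^q + (‖L s‖ * ‖u s‖)^q) :=
            integral_mono_of_nonneg
              (Eventually.of_forall fun s => Real.rpow_nonneg (norm_nonneg _) _) (hdom t)
              (ae_restrict_of_ae hptw)
        _ = 2^q * ((∫ s in Ioo t (t+1), ‖f s 0‖^q) +
              ∫ s in Ioo t (t+1), (‖L s‖ * ‖u s‖)^q) := by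
            rw [integral_const_mul, integral_add (h0i t) (hprod t)]
        _ ≤ 2^q * (M0 + (max ML 0)^(q/r) * (max Mu 0)^(q/p)) := by
            have h1 : ∫ s in Ioo t (t+1), ‖f s 0‖^q ≤ M0 := by
              rw [← SIntegral_eq]; exact hM0 ⟨t, rfl⟩
            have h2 : ∫ s in Ioo t (t+1), (‖L s‖ * ‖u s‖)^q ≤
                (max ML 0)^(q/r) * (max Mu 0)^(q/p) := by
              obtain ⟨-, hhold⟩ := aux_hoelder hq0 hqp hqr hpqr hLm.restrict (hLi t)
                hum.restrict (hInt u hu t)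
              refine hhold.trans ?_
              have hL1 : (∫ s in Ioo t (t+1), ‖L s‖^r) ≤ max ML 0 := by
                rw [← SIntegral_eq]; exact (hML' t).trans (le_max_left _ _)
              have hu1 : (∫ s in Ioo t (t+1), ‖u s‖^p) ≤ max Mu 0 := by
                rw [← SIntegral_eq]; exact (hMu ⟨t, rfl⟩).trans (le_max_left _ _)
              have hLnn : (0:ℝ) ≤ ∫ s in Ioo t (t+1), ‖L s‖^r :=
                integral_nonneg fun s => Real.rpow_nonneg (norm_nonneg _) _
              have hunn : (0:ℝ) ≤ ∫ s in Ioo t (t+1), ‖u s‖^p :=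
                integral_nonneg fun s => Real.rpow_nonneg (norm_nonneg _) _
              exact mul_le_mul (Real.rpow_le_rpow hLnn hL1 (by positivity))
                (Real.rpow_le_rpow hunn hu1 (by positivity))
                (Real.rpow_nonneg hunn _) (Real.rpow_nonneg (le_max_of_le_right le_rfl) _)
            have h2q : (0:ℝ) ≤ 2^q := Real.rpow_nonneg (by norm_num) _
            nlinarith [h2q]
  · -- part 2
    intro u v hu hv
    have hwm : AEStronglyMeasurable (fun s => u s - v s) volume := hu.1.1.sub hv.1.1
    have hwpm : AEStronglyMeasurable (fun s => ‖u s - v s‖ ^ p) volume :=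
      (hwm.norm.aemeasurable.pow aemeasurable_const).aestronglyMeasurable
    have hwptw : ∀ s : ℝ, ‖u s - v s‖ ^ p ≤ 2^p * (‖u s‖^p + ‖v s‖^p) := fun s =>
      calc ‖u s - v s‖ ^ p ≤ (‖u s‖ + ‖v s‖) ^ p :=
            Real.rpow_le_rpow (norm_nonneg _) (norm_sub_le _ _) hp0.le
        _ ≤ 2^p * (‖u s‖^p + ‖v s‖^p) :=
            aux_rpow_add_le (norm_nonneg _) (norm_nonneg _) hp0.le
    have hwdom : ∀ t : ℝ, Integrable (fun s => 2^p * (‖u s‖^p + ‖v s‖^p))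
        (volume.restrict (Ioo t (t+1))) := fun t =>
      ((hInt u hu t).add (hInt v hv t)).const_mul _
    have hwi : ∀ t : ℝ, Integrable (fun s => ‖u s - v s‖ ^ p)
        (volume.restrict (Ioo t (t+1))) := by
      intro t
      refine (hwdom t).mono' hwpm.restrict ?_
      refine Eventually.of_forall fun s => ?_
      rw [Real.norm_eq_abs, abs_of_nonneg (Real.rpow_nonneg (norm_nonneg _) _)]
      exact hwptw s
    have hGb : ∀ᵐ s : ℝ, ‖f s (u s) - f s (v s)‖ ≤ ‖L s‖ * ‖u s - v s‖ := by
      filter_upwards [hlip] with s hs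
      refine (hs (u s) (v s)).trans ?_
      rw [Real.norm_eq_abs]
      exact mul_le_mul_of_nonneg_right (le_abs_self _) (norm_nonneg _)
    obtain ⟨Mu, hMu⟩ := hu.2
    obtain ⟨Mv, hMv⟩ := hv.2
    have hwBdd : BddAbove (Set.range (SIntegral p (fun s => u s - v s))) := by
      refine ⟨2^p * (Mu + Mv), ?_⟩
      rintro x ⟨t, rfl⟩
      rw [SIntegral_eq]
      calc ∫ s in Ioo t (t+1), ‖u s - v s‖ ^ p
          ≤ ∫ s in Ioo t (t+1), 2^p * (‖u s‖^p + ‖v s‖^p) :=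
            integral_mono_of_nonneg
              (Eventually.of_forall fun s => Real.rpow_nonneg (norm_nonneg _) _) (hwdom t)
              (Eventually.of_forall fun s => hwptw s)
        _ = 2^p * ((∫ s in Ioo t (t+1), ‖u s‖^p) + ∫ s in Ioo t (t+1), ‖v s‖^p) := by
            rw [integral_const_mul, integral_add (hInt u hu t) (hInt v hv t)]
        _ ≤ 2^p * (Mu + Mv) := by
            have h1 : ∫ s in Ioo t (t+1), ‖u s‖^p ≤ Mu := by
              rw [← SIntegral_eq]; exact hMu ⟨t, rfl⟩
            have h2 : ∫ s in Ioo t (t+1), ‖v s‖^p ≤ Mv := by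
              rw [← SIntegral_eq]; exact hMv ⟨t, rfl⟩
            have h2p : (0:ℝ) ≤ 2^p := Real.rpow_nonneg (by norm_num) _
            nlinarith [h2p]
    unfold SNorm
    refine Real.iSup_le (fun t => ?_)
      (mul_nonneg (SNorm_nonneg _ _) (SNorm_nonneg _ _))
    have hb := core (fun s => f s (u s) - f s (v s)) (fun s => u s - v s) hwm hwi hGb t
    calc (SIntegral q (fun s => f s (u s) - f s (v s)) t) ^ (1/q)
        ≤ ((SIntegral r L t) ^ (q/r) *
            (SIntegral p (fun s => u s - v s) t) ^ (q/p)) ^ (1/q) :=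
          Real.rpow_le_rpow (SIntegral_nonneg _ _ _) hb (by positivity)
      _ = (SIntegral r L t) ^ (1/r) * (SIntegral p (fun s => u s - v s) t) ^ (1/p) := by
          rw [Real.mul_rpow (Real.rpow_nonneg (SIntegral_nonneg _ _ _) _)
            (Real.rpow_nonneg (SIntegral_nonneg _ _ _) _),
            ← Real.rpow_mul (SIntegral_nonneg _ _ _), ← Real.rpow_mul (SIntegral_nonneg _ _ _)]
          rw [show q/r * (1/q) = 1/r by field_simp, show q/p * (1/q) = 1/p by field_simp]
      _ ≤ SNorm r L * SNorm p (fun s => u s - v s) :=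
          mul_le_mul (le_SNorm hr0.le ⟨ML, hML⟩ t) (le_SNorm hp0.le hwBdd t)
            (Real.rpow_nonneg (SIntegral_nonneg _ _ _) _) (SNorm_nonneg _ _)
end
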